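/- arXiv:2603.19717 — 2 statements merged into one kernel-verified Lean document; each statement's English description precedes it below -/
import Mathlib

section
/- Let K be a Markov kernel on a countable set G satisfying condition (*): there exist l ∈ ℕ and ε > 0 such that ‖K^l(x,·) ∧ K^{l+1}(x,·)‖ > ε for every x ∈ G. Then for every v ∈ G and every k ∈ ℕ, lim_{n→∞} ‖K^{n+k}(v,·) − K^n(v,·)‖_TV = 0. -/
open MeasureTheory ENNReal

namespace CMTPaper

variable {G : Type*}

/-- The `n`-step kernel of a Markov kernel `K` on a countable set `G`:
`K^0(x,·) = δ_x` and `K^{n+1}(x,A) = Σ_y K(x,{y})·K^n(y,A)`. -/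
noncomputable def nStep [MeasurableSpace G] (K : G → Measure G) : ℕ → G → Measure G
  | 0 => fun x => Measure.dirac x
  | n + 1 => fun x => Measure.sum fun y => K x {y} • nStep K n y

/-- A kernel is cycle-free if `K^m(x,{x}) = 0` for every `x` and every `m ≥ 1`. -/
def CycleFree [MeasurableSpace G] (K : G → Measure G) : Prop :=
  ∀ x : G, ∀ m : ℕ, 1 ≤ m → nStep K m x {x} = 0

/-- `P` is the law on path space `G^ℕ` of the Markov chain with kernel `K` started at `x`
(characterized by its finite-dimensional cylinder probabilities). -/
def IsPathLaw [MeasurableSpace G] (K : G → Measure G) (x : G) (P : Measure (ℕ → G)) : Prop :=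
  ∀ (n : ℕ) (u : ℕ → G), u 0 = x →
    P {ω | ∀ i ≤ n, ω i = u i} = ∏ i ∈ Finset.range n, K (u i) {u (i + 1)}

/-- The set of collisions of two paths: pairs `(m,n)` with `m,n ≥ 1` and `ω m = ω' n`. -/
def collisions (ω ω' : ℕ → G) : Set (ℕ × ℕ) :=
  {p : ℕ × ℕ | 1 ≤ p.1 ∧ 1 ≤ p.2 ∧ ω p.1 = ω' p.2}

/-- `μ` is the law on `G^G` of the coalescing Markov trajectories (CMT) with kernel `K`,
i.e. the product measure `⊗_x K(x,·)` (characterized on cylinders). -/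
def IsCMTLaw [MeasurableSpace G] (K : G → Measure G) (μ : Measure (G → G)) : Prop :=
  ∀ (s : Finset G) (u : G → G), μ {f | ∀ x ∈ s, f x = u x} = ∏ x ∈ s, K x {u x}

/-- Adjacency in the graph of `f`: an edge between `x` and `f x` for every `x`. -/
def Adj (f : G → G) (a b : G) : Prop := f a = b ∨ f b = a

/-- `a` and `b` lie in the same connected component of the graph of `f`. -/
def SameComponent (f : G → G) (a b : G) : Prop := Relation.ReflTransGen (Adj f) a b

/-- The connected component of `v` in the graph of `f`. -/
def component (f : G → G) (v : G) : Set G := {u | SameComponent f u v}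

/-- The level set of `v`: points whose forward orbit merges with that of `v` after the same
number of steps. -/
def levelSet (f : G → G) (v : G) : Set G := {w | ∃ n : ℕ, f^[n] w = f^[n] v}

/-- The ancestor-line map `π (v, f) = (f^{(n)}(v))_{n ≥ 0}`. -/
def ancLine : G × (G → G) → ℕ → G := fun p n => p.2^[n] p.1

/-- Total-variation distance between two measures on a countable discrete space. -/
noncomputable def tvDist [MeasurableSpace G] (ν₁ ν₂ : Measure G) : ℝ≥0∞ :=
  ∑' y : G, ((ν₁ {y} - ν₂ {y}) + (ν₂ {y} - ν₁ {y}))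

/-- The mass `‖ν₁ ∧ ν₂‖ = Σ_y min(ν₁{y}, ν₂{y})` of the meet of two measures. -/
noncomputable def meetMass [MeasurableSpace G] (ν₁ ν₂ : Measure G) : ℝ≥0∞ :=
  ∑' y : G, min (ν₁ {y}) (ν₂ {y})

/-- The shift on path space, `σ (x_i)_{i≥0} = (x_{i+1})_{i≥0}`. -/
def shift : (ℕ → G) → ℕ → G := fun ω i => ω (i + 1)

/-- An invariant path property: a measurable shift-invariant subset of path space. -/
def IsInvariantPathProperty [MeasurableSpace G] (A : Set (ℕ → G)) : Prop :=
  MeasurableSet A ∧ shift ⁻¹' A = A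

/-- The tail σ-algebra `⋂_n σ((x_i)_{i ≥ n})` on path space. -/
def tailMS (G : Type*) [MeasurableSpace G] : MeasurableSpace (ℕ → G) :=
  ⨅ n : ℕ, MeasurableSpace.comap (fun ω : ℕ → G => fun i => ω (n + i)) inferInstance

/-- A tail path property: a set in the tail σ-algebra of path space. -/
def IsTailPathProperty [MeasurableSpace G] (A : Set (ℕ → G)) : Prop :=
  MeasurableSet[tailMS G] A

/-- A function `h` is `K`-harmonic if `h(x) = Σ_y K(x,{y}) h(y)` for every `x`. -/
def IsKHarmonic [MeasurableSpace G] (K : G → Measure G) (h : G → ℝ) : Prop :=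
  ∀ x : G, h x = ∑' y : G, (K x {y}).toReal * h y

/-- `K` has the Liouville property: every bounded `K`-harmonic function is constant. -/
def LiouvilleProperty [MeasurableSpace G] (K : G → Measure G) : Prop :=
  ∀ h : G → ℝ, (∃ C : ℝ, ∀ x, |h x| ≤ C) → IsKHarmonic K h → ∀ x y : G, h x = h y


/-! ### Auxiliary development for Statement 12 -/

section ZeroTwoLaw
open scoped Classical
set_option linter.unusedSectionVars false

variable [Countable G] [MeasurableSpace G] [MeasurableSingletonClass G]

/-- Matrix of the `n`-step kernel on singletons. -/
noncomputable def pk (K : G → Measure G) (n : ℕ) (x y : G) : ℝ≥0∞ := nStep K n x {y}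

lemma pk_zero (K : G → Measure G) (x y : G) :
    pk K 0 x y = if x = y then 1 else 0 := by
  simp only [pk, nStep, Measure.dirac_apply' x (measurableSet_singleton y)]
  by_cases h : x = y <;> simp [Set.indicator, h]

lemma pk_succ (K : G → Measure G) (n : ℕ) (x y : G) :
    pk K (n + 1) x y = ∑' z, K x {z} * pk K n z y := by
  simp only [pk, nStep]
  rw [Measure.sum_apply _ (measurableSet_singleton y)]
  simp [Measure.smul_apply, smul_eq_mul]

lemma tsum_singleton_one (μ : Measure G) [IsProbabilityMeasure μ] :
    ∑' y : G, μ {y} = 1 := by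
  have hU : (⋃ y : G, ({y} : Set G)) = Set.univ := by
    ext z; simp
  have := measure_iUnion (μ := μ)
    (fun a b hab => by simpa [Set.disjoint_singleton] using hab)
    (fun y : G => measurableSet_singleton y)
  rw [hU] at this
  rw [← this, measure_univ]

lemma pk_mass (K : G → Measure G) (hK : ∀ x, IsProbabilityMeasure (K x)) (n : ℕ) (x : G) :
    ∑' y, pk K n x y = 1 := by
  induction n generalizing x with
  | zero =>
      simp only [pk_zero]
      rw [show (fun y => if x = y then (1:ℝ≥0∞) else 0) = fun y => if y = x then (1:ℝ≥0∞) else 0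
        from funext fun y => by by_cases h : x = y <;> simp [h, eq_comm]]
      exact tsum_ite_eq x 1
  | succ n ih =>
      simp only [pk_succ]
      rw [ENNReal.tsum_comm]
      have : ∀ z : G, ∑' y, K x {z} * pk K n z y = K x {z} := by
        intro z
        rw [ENNReal.tsum_mul_left, ih z, mul_one]
      rw [tsum_congr this]
      exact tsum_singleton_one (K x)

lemma pk_add (K : G → Measure G) (m n : ℕ) (x y : G) :
    pk K (m + n) x y = ∑' z, pk K m x z * pk K n z y := by
  induction m generalizing x with
  | zero =>
      simp only [Nat.zero_add, pk_zero]
      rw [show (fun z => (if x = z then (1:ℝ≥0∞) else 0) * pk K n z y)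
          = fun z => if z = x then pk K n x y else 0 from funext fun z => by
        by_cases h : x = z <;> simp [h, eq_comm]]
      exact (tsum_ite_eq x (fun _ => pk K n x y)).symm
  | succ m ih =>
      have h1 : m + 1 + n = (m + n) + 1 := by ring
      rw [h1, pk_succ]
      have : ∀ z, K x {z} * pk K (m + n) z y
          = ∑' w, K x {z} * (pk K m z w * pk K n w y) := by
        intro z; rw [ih z, ← ENNReal.tsum_mul_left]
      rw [tsum_congr this, ENNReal.tsum_comm]
      refine tsum_congr fun w => ?_
      rw [pk_succ, ← ENNReal.tsum_mul_right]
      exact tsum_congr fun z => by ring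

end ZeroTwoLaw

section Letters

open scoped Classical
set_option linter.unusedSectionVars false

variable [Countable G] [MeasurableSpace G] [MeasurableSingletonClass G]

variable (K : G → Measure G) (l M : ℕ)

/-- meet mass of `K^l(x)` and `K^{l+1}(x)`. -/
noncomputable def mm (x : G) : ℝ≥0∞ := meetMass (nStep K l x) (nStep K (l + 1) x)

lemma mm_eq (x : G) : mm K l x = ∑' y, min (pk K l x y) (pk K (l + 1) x y) := rfl

/-- the common sub-kernel (the `ε`-overlap letter). -/
noncomputable def rr (x y : G) : ℝ≥0∞ :=
  ((M : ℝ≥0∞)⁻¹ / mm K l x) * min (pk K l x y) (pk K (l + 1) x y)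

/-- residual letter of duration `l`. -/
noncomputable def aa0 (x y : G) : ℝ≥0∞ := pk K l x y - rr K l M x y

/-- residual letter of duration `l+1`. -/
noncomputable def aa1 (x y : G) : ℝ≥0∞ := pk K (l + 1) x y - rr K l M x y

variable {K l M}
variable (hK : ∀ x, IsProbabilityMeasure (K x))
variable (hM : ∀ x, (M : ℝ≥0∞)⁻¹ < mm K l x)

include hK in
lemma mm_le_one (x : G) : mm K l x ≤ 1 := by
  rw [mm_eq]
  calc ∑' y, min (pk K l x y) (pk K (l + 1) x y) ≤ ∑' y, pk K l x y :=
        ENNReal.tsum_le_tsum fun y => min_le_left _ _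
    _ = 1 := pk_mass K hK l x

include hK hM in
lemma mm_ne_zero (x : G) : mm K l x ≠ 0 := by
  have h0 : (0 : ℝ≥0∞) < (M : ℝ≥0∞)⁻¹ := ENNReal.inv_pos.mpr (ENNReal.natCast_ne_top M)
  exact (lt_trans h0 (hM x)).ne'

include hK in
lemma mm_ne_top (x : G) : mm K l x ≠ ∞ :=
  (lt_of_le_of_lt (mm_le_one hK x) ENNReal.one_lt_top).ne

include hK hM in
lemma rr_le_min (x y : G) :
    rr K l M x y ≤ min (pk K l x y) (pk K (l + 1) x y) := by
  have hc : (M : ℝ≥0∞)⁻¹ / mm K l x ≤ 1 := by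
    calc (M : ℝ≥0∞)⁻¹ / mm K l x ≤ mm K l x / mm K l x :=
          ENNReal.div_le_div_right (le_of_lt (hM x)) _
      _ = 1 := ENNReal.div_self (mm_ne_zero hK hM x) (mm_ne_top hK x)
  calc rr K l M x y ≤ 1 * min (pk K l x y) (pk K (l + 1) x y) :=
        mul_le_mul_left hc _
    _ = _ := one_mul _

include hK hM in
lemma rr_le_l (x y : G) : rr K l M x y ≤ pk K l x y :=
  (rr_le_min hK hM x y).trans (min_le_left _ _)

include hK hM in
lemma rr_le_l1 (x y : G) : rr K l M x y ≤ pk K (l + 1) x y :=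
  (rr_le_min hK hM x y).trans (min_le_right _ _)

include hK hM in
lemma rr_mass (x : G) : ∑' y, rr K l M x y = (M : ℝ≥0∞)⁻¹ := by
  unfold rr
  rw [ENNReal.tsum_mul_left, ← mm_eq, ENNReal.div_mul_cancel (mm_ne_zero hK hM x) (mm_ne_top hK x)]

include hK hM in
lemma rr_add_aa0 (x y : G) : rr K l M x y + aa0 K l M x y = pk K l x y := by
  unfold aa0
  rw [add_comm]
  exact tsub_add_cancel_of_le (rr_le_l hK hM x y)

include hK hM in
lemma rr_add_aa1 (x y : G) : rr K l M x y + aa1 K l M x y = pk K (l + 1) x y := by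
  unfold aa1
  rw [add_comm]
  exact tsub_add_cancel_of_le (rr_le_l1 hK hM x y)


include hK hM in
lemma eps_ne_top (x : G) : (M : ℝ≥0∞)⁻¹ ≠ ∞ :=
  ((lt_of_lt_of_le (hM x) (mm_le_one hK x)).trans ENNReal.one_lt_top).ne

include hK hM in
lemma aa0_mass (x : G) : ∑' y, aa0 K l M x y = 1 - (M : ℝ≥0∞)⁻¹ := by
  have h : ∑' y, aa0 K l M x y + (M : ℝ≥0∞)⁻¹ = 1 := by
    rw [← rr_mass hK hM x, ← ENNReal.tsum_add]
    rw [show (fun y => aa0 K l M x y + rr K l M x y) = fun y => pk K l x y from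
      funext fun y => by rw [add_comm]; exact rr_add_aa0 hK hM x y]
    exact pk_mass K hK l x
  exact ENNReal.eq_sub_of_add_eq (eps_ne_top hK hM x) h

include hK hM in
lemma aa1_mass (x : G) : ∑' y, aa1 K l M x y = 1 - (M : ℝ≥0∞)⁻¹ := by
  have h : ∑' y, aa1 K l M x y + (M : ℝ≥0∞)⁻¹ = 1 := by
    rw [← rr_mass hK hM x, ← ENNReal.tsum_add]
    rw [show (fun y => aa1 K l M x y + rr K l M x y) = fun y => pk K (l + 1) x y from
      funext fun y => by rw [add_comm]; exact rr_add_aa1 hK hM x y]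
    exact pk_mass K hK (l + 1) x
  exact ENNReal.eq_sub_of_add_eq (eps_ne_top hK hM x) h

end Letters

section PhiSigma

open scoped Classical
set_option linter.unusedSectionVars false

variable [Countable G] [MeasurableSpace G] [MeasurableSingletonClass G]

variable (K : G → Measure G) (l M : ℕ)

/-- sum over words of length `n`, weighted by `g(#R, #A1)`, of word-matrices. -/
noncomputable def Phi : ℕ → (ℕ → ℕ → ℝ≥0∞) → G → G → ℝ≥0∞
  | 0, g => fun x y => if x = y then g 0 0 else 0
  | n + 1, g => fun x y =>
      (∑' z, rr K l M x z * Phi n (fun s d => g (s + 1) d) z y)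
    + (∑' z, aa0 K l M x z * Phi n g z y)
    + (∑' z, aa1 K l M x z * Phi n (fun s d => g s (d + 1)) z y)

/-- total mass of `Phi`. -/
noncomputable def sg : ℕ → (ℕ → ℕ → ℝ≥0∞) → ℝ≥0∞
  | 0, g => g 0 0
  | n + 1, g => (M : ℝ≥0∞)⁻¹ * sg n (fun s d => g (s + 1) d)
    + (1 - (M : ℝ≥0∞)⁻¹) * sg n g
    + (1 - (M : ℝ≥0∞)⁻¹) * sg n (fun s d => g s (d + 1))

variable {K l M}

lemma Phi_mono {g g' : ℕ → ℕ → ℝ≥0∞} (h : ∀ s d, g s d ≤ g' s d) (n : ℕ) (x y : G) :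
    Phi K l M n g x y ≤ Phi K l M n g' x y := by
  induction n generalizing g g' x with
  | zero => simp only [Phi]; split <;> simp [h]
  | succ n ih =>
      simp only [Phi]
      gcongr
      · exact ih (fun s d => h (s + 1) d) _
      · exact ih h _
      · exact ih (fun s d => h s (d + 1)) _

lemma sg_mono {g g' : ℕ → ℕ → ℝ≥0∞} (h : ∀ s d, g s d ≤ g' s d) (n : ℕ) :
    sg M n g ≤ sg M n g' := by
  induction n generalizing g g' with
  | zero => simpa [sg] using h 0 0
  | succ n ih =>
      simp only [sg]
      gcongr
      · exact ih (fun s d => h (s + 1) d)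
      · exact ih h
      · exact ih (fun s d => h s (d + 1))

lemma Phi_add (g g' : ℕ → ℕ → ℝ≥0∞) (n : ℕ) (x y : G) :
    Phi K l M n (fun s d => g s d + g' s d) x y = Phi K l M n g x y + Phi K l M n g' x y := by
  induction n generalizing g g' x with
  | zero => simp only [Phi]; split <;> simp
  | succ n ih =>
      simp only [Phi]
      rw [show (fun s d => g (s + 1) d + g' (s + 1) d) = fun s d => g (s + 1) d + g' (s + 1) d
        from rfl]
      have h1 : ∀ z, rr K l M x z * Phi K l M n (fun s d => g (s + 1) d + g' (s + 1) d) z y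
          = rr K l M x z * Phi K l M n (fun s d => g (s + 1) d) z y
          + rr K l M x z * Phi K l M n (fun s d => g' (s + 1) d) z y := by
        intro z; rw [ih, mul_add]
      have h2 : ∀ z, aa0 K l M x z * Phi K l M n (fun s d => g s d + g' s d) z y
          = aa0 K l M x z * Phi K l M n g z y + aa0 K l M x z * Phi K l M n g' z y := by
        intro z; rw [ih, mul_add]
      have h3 : ∀ z, aa1 K l M x z * Phi K l M n (fun s d => g s (d + 1) + g' s (d + 1)) z y
          = aa1 K l M x z * Phi K l M n (fun s d => g s (d + 1)) z y
          + aa1 K l M x z * Phi K l M n (fun s d => g' s (d + 1)) z y := by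
        intro z; rw [ih, mul_add]
      rw [tsum_congr h1, tsum_congr h2, tsum_congr h3, ENNReal.tsum_add, ENNReal.tsum_add,
        ENNReal.tsum_add]
      ring

lemma sg_add (g g' : ℕ → ℕ → ℝ≥0∞) (n : ℕ) :
    sg M n (fun s d => g s d + g' s d) = sg M n g + sg M n g' := by
  induction n generalizing g g' with
  | zero => simp [sg]
  | succ n ih =>
      simp only [sg]
      rw [show sg M n (fun s d => g (s + 1) d + g' (s + 1) d)
          = sg M n (fun s d => g (s + 1) d) + sg M n (fun s d => g' (s + 1) d) from ih _ _,
        ih g g',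
        show sg M n (fun s d => g s (d + 1) + g' s (d + 1))
          = sg M n (fun s d => g s (d + 1)) + sg M n (fun s d => g' s (d + 1)) from ih _ _]
      ring

lemma Phi_smul (c : ℝ≥0∞) (g : ℕ → ℕ → ℝ≥0∞) (n : ℕ) (x y : G) :
    Phi K l M n (fun s d => c * g s d) x y = c * Phi K l M n g x y := by
  induction n generalizing g x with
  | zero => simp only [Phi]; split <;> simp
  | succ n ih =>
      simp only [Phi]
      have h1 : ∀ z, rr K l M x z * Phi K l M n (fun s d => c * g (s + 1) d) z y
          = c * (rr K l M x z * Phi K l M n (fun s d => g (s + 1) d) z y) := by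
        intro z; rw [ih]; ring
      have h2 : ∀ z, aa0 K l M x z * Phi K l M n (fun s d => c * g s d) z y
          = c * (aa0 K l M x z * Phi K l M n g z y) := by
        intro z; rw [ih]; ring
      have h3 : ∀ z, aa1 K l M x z * Phi K l M n (fun s d => c * g s (d + 1)) z y
          = c * (aa1 K l M x z * Phi K l M n (fun s d => g s (d + 1)) z y) := by
        intro z; rw [ih]; ring
      rw [tsum_congr h1, tsum_congr h2, tsum_congr h3, ENNReal.tsum_mul_left,
        ENNReal.tsum_mul_left, ENNReal.tsum_mul_left]
      ring

lemma sg_smul (c : ℝ≥0∞) (g : ℕ → ℕ → ℝ≥0∞) (n : ℕ) :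
    sg M n (fun s d => c * g s d) = c * sg M n g := by
  induction n generalizing g with
  | zero => simp [sg]
  | succ n ih =>
      simp only [sg]
      rw [show sg M n (fun s d => c * g (s + 1) d) = c * sg M n (fun s d => g (s + 1) d)
          from ih _,
        ih g,
        show sg M n (fun s d => c * g s (d + 1)) = c * sg M n (fun s d => g s (d + 1))
          from ih _]
      ring

lemma sg_zero_fun (n : ℕ) : sg M n (fun _ _ => 0) = 0 := by
  induction n with
  | zero => rfl
  | succ n ih => simp [sg, ih]

lemma Phi_zero_fun (n : ℕ) (x y : G) : Phi K l M n (fun _ _ => 0) x y = 0 := by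
  induction n generalizing x with
  | zero => simp only [Phi]; split <;> simp
  | succ n ih => simp only [Phi]; simp [ih]

variable (hK : ∀ x, IsProbabilityMeasure (K x))
variable (hM : ∀ x, (M : ℝ≥0∞)⁻¹ < mm K l x)

include hK hM in
lemma Phi_mass (n : ℕ) (g : ℕ → ℕ → ℝ≥0∞) (x : G) :
    ∑' y, Phi K l M n g x y = sg M n g := by
  induction n generalizing g x with
  | zero =>
      simp only [Phi, sg]
      rw [show (fun y => if x = y then g 0 0 else 0) = fun y => if y = x then g 0 0 else 0 from
        funext fun y => by by_cases h : x = y <;> simp [h, eq_comm]]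
      exact tsum_ite_eq x _
  | succ n ih =>
      simp only [Phi, sg]
      rw [ENNReal.tsum_add, ENNReal.tsum_add, ENNReal.tsum_comm (f := fun y z =>
          rr K l M x z * Phi K l M n (fun s d => g (s + 1) d) z y),
        ENNReal.tsum_comm (f := fun y z => aa0 K l M x z * Phi K l M n g z y),
        ENNReal.tsum_comm (f := fun y z =>
          aa1 K l M x z * Phi K l M n (fun s d => g s (d + 1)) z y)]
      have e1 : ∀ z : G, ∑' y, rr K l M x z * Phi K l M n (fun s d => g (s + 1) d) z y
          = rr K l M x z * sg M n (fun s d => g (s + 1) d) := by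
        intro z; rw [ENNReal.tsum_mul_left, ih]
      have e2 : ∀ z : G, ∑' y, aa0 K l M x z * Phi K l M n g z y
          = aa0 K l M x z * sg M n g := by
        intro z; rw [ENNReal.tsum_mul_left, ih]
      have e3 : ∀ z : G, ∑' y, aa1 K l M x z * Phi K l M n (fun s d => g s (d + 1)) z y
          = aa1 K l M x z * sg M n (fun s d => g s (d + 1)) := by
        intro z; rw [ENNReal.tsum_mul_left, ih]
      rw [tsum_congr e1, tsum_congr e2, tsum_congr e3, ENNReal.tsum_mul_right,
        ENNReal.tsum_mul_right, ENNReal.tsum_mul_right, rr_mass hK hM x, aa0_mass hK hM x,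
        aa1_mass hK hM x]

end PhiSigma

section Coef

/-- the binomial coefficient pattern of the word expansion. -/
def coef (j s d : ℕ) : ℕ := if d ≤ j then s.choose (j - d) else 0

/-- `coef` as an `ℝ≥0∞`-valued function. -/
noncomputable def gc (j : ℕ) : ℕ → ℕ → ℝ≥0∞ := fun s d => (coef j s d : ℝ≥0∞)

lemma coef_ss_zero (s d : ℕ) : coef 0 (s + 1) d = coef 0 s d := by
  unfold coef
  rcases Nat.eq_zero_or_pos d with h | h
  · subst h; simp
  · rw [if_neg (by omega), if_neg (by omega)]

lemma coef_ss_succ (j s d : ℕ) : coef (j + 1) (s + 1) d = coef (j + 1) s d + coef j s d := by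
  unfold coef
  rcases Nat.lt_trichotomy d (j + 1) with h | h | h
  · have hd : d ≤ j := by omega
    rw [if_pos (by omega), if_pos (by omega), if_pos hd,
      show j + 1 - d = (j - d) + 1 by omega, Nat.choose_succ_succ']
    omega
  · subst h
    rw [if_pos le_rfl, if_pos le_rfl, if_neg (by omega)]
    simp
  · rw [if_neg (by omega), if_neg (by omega), if_neg (by omega)]

lemma coef_sd_zero (s d : ℕ) : coef 0 s (d + 1) = 0 := by
  unfold coef; rw [if_neg (by omega)]

lemma coef_sd_succ (j s d : ℕ) : coef (j + 1) s (d + 1) = coef j s d := by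
  unfold coef
  rcases le_or_gt d j with h | h
  · rw [if_pos (by omega), if_pos h, show j + 1 - (d + 1) = j - d by omega]
  · rw [if_neg (by omega), if_neg (by omega)]

lemma gc_ss_zero : (fun s d => gc 0 (s + 1) d) = gc 0 := by
  funext s d; simp only [gc, coef_ss_zero]

lemma gc_ss_succ (j : ℕ) :
    (fun s d => gc (j + 1) (s + 1) d) = fun s d => gc (j + 1) s d + gc j s d := by
  funext s d; simp only [gc, coef_ss_succ]; push_cast; ring

lemma gc_sd_zero : (fun s d => gc 0 s (d + 1)) = fun _ _ => (0 : ℝ≥0∞) := by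
  funext s d; simp only [gc, coef_sd_zero]; simp

lemma gc_sd_succ (j : ℕ) : (fun s d => gc (j + 1) s (d + 1)) = gc j := by
  funext s d; simp only [gc, coef_sd_succ]

end Coef

section MainIdentity

open scoped Classical
set_option linter.unusedSectionVars false

variable [Countable G] [MeasurableSpace G] [MeasurableSingletonClass G]

variable {K : G → Measure G} {l M : ℕ}
variable (hK : ∀ x, IsProbabilityMeasure (K x))
variable (hM : ∀ x, (M : ℝ≥0∞)⁻¹ < mm K l x)

include hK hM in
lemma main_identity (n : ℕ) :
    ∀ (j : ℕ) (x y : G),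
      (Nat.choose n j : ℝ≥0∞) * pk K (n * l + j) x y = Phi K l M n (gc j) x y := by
  induction n with
  | zero =>
      intro j x y
      cases j with
      | zero =>
          simp only [Nat.choose_self, Nat.cast_one, one_mul, Nat.zero_mul, Nat.add_zero,
            pk_zero, Phi]
          split <;> simp [gc, coef]
      | succ j =>
          simp only [Nat.choose_succ_self, Nat.cast_zero, zero_mul, Phi]
          split <;> simp [gc, coef]
  | succ n ih =>
      intro j x y
      cases j with
      | zero =>
          have hsplit : pk K ((n + 1) * l) x y = ∑' z, pk K l x z * pk K (n * l) z y := by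
            rw [show (n + 1) * l = l + n * l by ring, pk_add]
          have hIH : ∀ z, pk K (n * l) z y = Phi K l M n (gc 0) z y := by
            intro z
            have := ih 0 z y
            simpa using this
          simp only [Phi, gc_ss_zero, gc_sd_zero, Phi_zero_fun, mul_zero, tsum_zero, add_zero]
          rw [Nat.choose_zero_right, Nat.cast_one, one_mul, hsplit]
          rw [tsum_congr fun z => by rw [hIH z, ← rr_add_aa0 hK hM x z, add_mul]]
          rw [ENNReal.tsum_add]
      | succ j =>
          have split1 : pk K ((n + 1) * l + (j + 1)) x y
              = ∑' z, pk K (l + 1) x z * pk K (n * l + j) z y := by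
            rw [show (n + 1) * l + (j + 1) = (l + 1) + (n * l + j) by ring, pk_add]
          have split2 : pk K ((n + 1) * l + (j + 1)) x y
              = ∑' z, pk K l x z * pk K (n * l + (j + 1)) z y := by
            rw [show (n + 1) * l + (j + 1) = l + (n * l + (j + 1)) by ring, pk_add]
          have pascal : ((n + 1).choose (j + 1) : ℝ≥0∞)
              = (n.choose j : ℝ≥0∞) + (n.choose (j + 1) : ℝ≥0∞) := by
            rw [Nat.choose_succ_succ']; push_cast; ring
          rw [pascal, add_mul]
          nth_rewrite 1 [split1]
          nth_rewrite 1 [split2]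
          rw [ENNReal.tsum_mul_left.symm, ENNReal.tsum_mul_left.symm]
          rw [tsum_congr (fun z => show
              (n.choose j : ℝ≥0∞) * (pk K (l + 1) x z * pk K (n * l + j) z y)
              = pk K (l + 1) x z * Phi K l M n (gc j) z y by
            rw [← ih j z y]; ring)]
          rw [tsum_congr (fun z => show
              (n.choose (j + 1) : ℝ≥0∞) * (pk K l x z * pk K (n * l + (j + 1)) z y)
              = pk K l x z * Phi K l M n (gc (j + 1)) z y by
            rw [← ih (j + 1) z y]; ring)]
          -- expand the letters
          rw [tsum_congr (fun z => show
              pk K (l + 1) x z * Phi K l M n (gc j) z y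
              = rr K l M x z * Phi K l M n (gc j) z y
                + aa1 K l M x z * Phi K l M n (gc j) z y by
            rw [← rr_add_aa1 hK hM x z, add_mul])]
          rw [tsum_congr (fun z => show
              pk K l x z * Phi K l M n (gc (j + 1)) z y
              = rr K l M x z * Phi K l M n (gc (j + 1)) z y
                + aa0 K l M x z * Phi K l M n (gc (j + 1)) z y by
            rw [← rr_add_aa0 hK hM x z, add_mul])]
          rw [ENNReal.tsum_add, ENNReal.tsum_add]
          simp only [Phi, gc_ss_succ, gc_sd_succ]
          rw [tsum_congr (fun z => show
              rr K l M x z * Phi K l M n (fun s d => gc (j + 1) s d + gc j s d) z y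
              = rr K l M x z * Phi K l M n (gc (j + 1)) z y
                + rr K l M x z * Phi K l M n (gc j) z y by
            rw [show Phi K l M n (fun s d => gc (j + 1) s d + gc j s d) z y
                = Phi K l M n (gc (j + 1)) z y + Phi K l M n (gc j) z y from
              Phi_add (gc (j + 1)) (gc j) n z y, mul_add])]
          rw [ENNReal.tsum_add]
          ring
end MainIdentity

section Moments

set_option linter.unusedSectionVars false

variable {M : ℕ}

lemma eps_add_eta (hM1 : 1 ≤ M) : (M : ℝ≥0∞)⁻¹ + (1 - (M : ℝ≥0∞)⁻¹) = 1 :=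
  add_tsub_cancel_of_le (ENNReal.inv_le_one.mpr (by exact_mod_cast hM1))

lemma collect (hM1 : 1 ≤ M) (X : ℝ≥0∞) :
    (M : ℝ≥0∞)⁻¹ * X + (1 - (M : ℝ≥0∞)⁻¹) * X = X := by
  rw [← add_mul, eps_add_eta hM1, one_mul]

lemma sg_I0 (hM1 : 1 ≤ M) (n : ℕ) : ∀ j, sg M n (gc j) = (n.choose j : ℝ≥0∞) := by
  induction n with
  | zero => intro j; simp [sg, gc, coef]
  | succ n ih =>
      intro j
      cases j with
      | zero =>
          simp only [sg, gc_ss_zero, gc_sd_zero, sg_zero_fun, mul_zero, add_zero, ih 0]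
          simp only [Nat.choose_zero_right, Nat.cast_one, mul_one]
          exact eps_add_eta hM1
      | succ j =>
          simp only [sg, gc_ss_succ, gc_sd_succ]
          rw [sg_add, ih (j + 1), ih j]
          calc (M:ℝ≥0∞)⁻¹ * ((n.choose (j+1) : ℝ≥0∞) + (n.choose j : ℝ≥0∞))
                + (1 - (M:ℝ≥0∞)⁻¹) * (n.choose (j+1) : ℝ≥0∞)
                + (1 - (M:ℝ≥0∞)⁻¹) * (n.choose j : ℝ≥0∞)
              = (M:ℝ≥0∞)⁻¹ * ((n.choose (j+1) : ℝ≥0∞) + (n.choose j : ℝ≥0∞))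
                + (1 - (M:ℝ≥0∞)⁻¹) * ((n.choose (j+1) : ℝ≥0∞) + (n.choose j : ℝ≥0∞)) := by
                ring
            _ = (n.choose (j+1) : ℝ≥0∞) + (n.choose j : ℝ≥0∞) := collect hM1 _
            _ = ((n+1).choose (j+1) : ℝ≥0∞) := by
                rw [Nat.choose_succ_succ']; push_cast; ring

/-- weight `s` (count of `R`-letters). -/
noncomputable def gs (j : ℕ) : ℕ → ℕ → ℝ≥0∞ := fun s d => gc j s d * (s : ℝ≥0∞)

/-- weight `s(s-1)`. -/
noncomputable def gs2 (j : ℕ) : ℕ → ℕ → ℝ≥0∞ := fun s d => gc j s d * ((s * (s - 1) : ℕ) : ℝ≥0∞)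

/-- weight `d` (count of `A1`-letters). -/
noncomputable def gd (j : ℕ) : ℕ → ℕ → ℝ≥0∞ := fun s d => gc j s d * (d : ℝ≥0∞)

/-- weight `d(d-1)`. -/
noncomputable def gd2 (j : ℕ) : ℕ → ℕ → ℝ≥0∞ := fun s d => gc j s d * ((d * (d - 1) : ℕ) : ℝ≥0∞)

lemma gs_ss_zero : (fun s d => gs 0 (s + 1) d) = fun s d => gs 0 s d + gc 0 s d := by
  funext s d; simp only [gs, gc, coef_ss_zero]; push_cast; ring

lemma gs_ss_succ (j : ℕ) : (fun s d => gs (j + 1) (s + 1) d)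
    = fun s d => (gs (j + 1) s d + gs j s d) + (gc (j + 1) s d + gc j s d) := by
  funext s d; simp only [gs, gc, coef_ss_succ]; push_cast; ring

lemma gs_sd_zero : (fun s d => gs 0 s (d + 1)) = fun _ _ => (0 : ℝ≥0∞) := by
  funext s d; simp only [gs, gc, coef_sd_zero]; simp

lemma gs_sd_succ (j : ℕ) : (fun s d => gs (j + 1) s (d + 1)) = gs j := by
  funext s d; simp only [gs, gc, coef_sd_succ]

lemma sg_I1 (hM1 : 1 ≤ M) (n : ℕ) :
    ∀ j, sg M n (gs j) = (n.choose j : ℝ≥0∞) * n * (M : ℝ≥0∞)⁻¹ := by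
  induction n with
  | zero => intro j; simp [sg, gs, gc, coef]
  | succ n ih =>
      intro j
      have hI0 := sg_I0 (M := M) hM1 n
      cases j with
      | zero =>
          simp only [sg, gs_ss_zero, gs_sd_zero, sg_zero_fun, mul_zero, add_zero]
          rw [sg_add, ih 0, hI0 0]
          simp only [Nat.choose_zero_right, Nat.cast_one, one_mul]
          calc (M:ℝ≥0∞)⁻¹ * ((n : ℝ≥0∞) * (M:ℝ≥0∞)⁻¹ + 1)
                + (1 - (M:ℝ≥0∞)⁻¹) * ((n : ℝ≥0∞) * (M:ℝ≥0∞)⁻¹)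
              = ((M:ℝ≥0∞)⁻¹ * ((n : ℝ≥0∞) * (M:ℝ≥0∞)⁻¹)
                + (1 - (M:ℝ≥0∞)⁻¹) * ((n : ℝ≥0∞) * (M:ℝ≥0∞)⁻¹)) + (M:ℝ≥0∞)⁻¹ * 1 := by
                ring
            _ = (n : ℝ≥0∞) * (M:ℝ≥0∞)⁻¹ + (M:ℝ≥0∞)⁻¹ := by rw [collect hM1, mul_one]
            _ = ((n : ℕ) + 1 : ℝ≥0∞) * (M:ℝ≥0∞)⁻¹ := by ring
            _ = (((n + 1 : ℕ)) : ℝ≥0∞) * (M:ℝ≥0∞)⁻¹ := by push_cast; ring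
      | succ j =>
          simp only [sg, gs_ss_succ, gs_sd_succ]
          rw [sg_add, sg_add, sg_add, ih (j + 1), ih j, hI0 (j + 1), hI0 j]
          set A := (n.choose (j+1) : ℝ≥0∞)
          set B := (n.choose j : ℝ≥0∞)
          set e := (M:ℝ≥0∞)⁻¹
          calc e * ((A * n * e + B * n * e) + (A + B)) + (1 - e) * (A * n * e)
                + (1 - e) * (B * n * e)
              = (e * ((A + B) * n * e) + (1 - e) * ((A + B) * n * e)) + e * (A + B) := by ring
            _ = (A + B) * n * e + e * (A + B) := by rw [collect hM1]
            _ = (A + B) * ((n : ℝ≥0∞) + 1) * e := by ring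
            _ = ((n+1).choose (j+1) : ℝ≥0∞) * ((n+1 : ℕ) : ℝ≥0∞) * e := by
                rw [Nat.choose_succ_succ']; push_cast; ring

lemma gs2_ss_zero : (fun s d => gs2 0 (s + 1) d)
    = fun s d => gs2 0 s d + 2 * gs 0 s d := by
  funext s d; simp only [gs2, gs, gc, coef_ss_zero]
  rw [show (s + 1) * (s + 1 - 1) = s * (s - 1) + 2 * s by cases s <;> simp <;> ring]
  push_cast; ring

lemma gs2_ss_succ (j : ℕ) : (fun s d => gs2 (j + 1) (s + 1) d)
    = fun s d => (gs2 (j + 1) s d + gs2 j s d) + 2 * (gs (j + 1) s d + gs j s d) := by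
  funext s d; simp only [gs2, gs, gc, coef_ss_succ]
  rw [show (s + 1) * (s + 1 - 1) = s * (s - 1) + 2 * s by cases s <;> simp <;> ring]
  push_cast; ring

lemma gs2_sd_zero : (fun s d => gs2 0 s (d + 1)) = fun _ _ => (0 : ℝ≥0∞) := by
  funext s d; simp only [gs2, gc, coef_sd_zero]; simp

lemma gs2_sd_succ (j : ℕ) : (fun s d => gs2 (j + 1) s (d + 1)) = gs2 j := by
  funext s d; simp only [gs2, gc, coef_sd_succ]

lemma sg_I2 (hM1 : 1 ≤ M) (n : ℕ) :
    ∀ j, sg M n (gs2 j)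
      = (n.choose j : ℝ≥0∞) * ((n * (n - 1) : ℕ) : ℝ≥0∞) * ((M : ℝ≥0∞)⁻¹ * (M : ℝ≥0∞)⁻¹) := by
  induction n with
  | zero => intro j; simp [sg, gs2, gc, coef]
  | succ n ih =>
      intro j
      have hI1 := sg_I1 (M := M) hM1 n
      have hcast : ((n + 1) * ((n + 1) - 1) : ℕ) = n * (n - 1) + 2 * n := by
        cases n with
        | zero => simp
        | succ n => simp only [Nat.add_sub_cancel, Nat.succ_sub_one]; ring
      have hP : (((n + 1) * ((n + 1) - 1) : ℕ) : ℝ≥0∞)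
          = ((n * (n - 1) : ℕ) : ℝ≥0∞) + ((2 * n : ℕ) : ℝ≥0∞) := by
        rw [hcast, Nat.cast_add]
      have h2n : ((2 * n : ℕ) : ℝ≥0∞) = 2 * (n : ℝ≥0∞) := by
        rw [Nat.cast_mul, Nat.cast_ofNat]
      cases j with
      | zero =>
          simp only [sg, gs2_ss_zero, gs2_sd_zero, sg_zero_fun, mul_zero, add_zero]
          rw [sg_add, sg_smul, ih 0, hI1 0]
          simp only [Nat.choose_zero_right, Nat.cast_one, one_mul]
          set e := (M:ℝ≥0∞)⁻¹
          set P := ((n * (n - 1) : ℕ) : ℝ≥0∞)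
          calc e * (P * (e * e) + 2 * ((n : ℝ≥0∞) * e))
                + (1 - e) * (P * (e * e))
              = (e * (P * (e * e)) + (1 - e) * (P * (e * e)))
                + ((2 * n : ℕ) : ℝ≥0∞) * (e * e) := by rw [h2n]; ring
            _ = P * (e * e) + ((2 * n : ℕ) : ℝ≥0∞) * (e * e) := by rw [collect hM1]
            _ = (((n + 1) * ((n + 1) - 1) : ℕ) : ℝ≥0∞) * (e * e) := by rw [hP]; ring
      | succ j =>
          simp only [sg, gs2_ss_succ, gs2_sd_succ]
          rw [sg_add, sg_add, sg_smul, sg_add, ih (j + 1), ih j, hI1 (j + 1), hI1 j]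
          have hC : (((n + 1).choose (j + 1) : ℕ) : ℝ≥0∞)
              = (n.choose (j + 1) : ℝ≥0∞) + (n.choose j : ℝ≥0∞) := by
            rw [Nat.choose_succ_succ', Nat.cast_add]; exact add_comm _ _
          set A := (n.choose (j+1) : ℝ≥0∞)
          set B := (n.choose j : ℝ≥0∞)
          set e := (M:ℝ≥0∞)⁻¹
          set P := ((n * (n - 1) : ℕ) : ℝ≥0∞)
          calc e * ((A * P * (e * e) + B * P * (e * e)) + 2 * (A * (n:ℝ≥0∞) * e + B * (n:ℝ≥0∞) * e))
                + (1 - e) * (A * P * (e * e)) + (1 - e) * (B * P * (e * e))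
              = (e * ((A + B) * (P * (e * e))) + (1 - e) * ((A + B) * (P * (e * e))))
                + (A + B) * ((2 * n : ℕ) : ℝ≥0∞) * (e * e) := by rw [h2n]; ring
            _ = (A + B) * (P * (e * e)) + (A + B) * ((2 * n : ℕ) : ℝ≥0∞) * (e * e) := by
                rw [collect hM1]
            _ = (((n + 1).choose (j + 1) : ℕ) : ℝ≥0∞)
                * (((n + 1) * ((n + 1) - 1) : ℕ) : ℝ≥0∞) * (e * e) := by
                rw [hP, hC]; ring

lemma gd_ss_zero : (fun s d => gd 0 (s + 1) d) = gd 0 := by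
  funext s d; simp only [gd, gc, coef_ss_zero]

lemma gd_ss_succ (j : ℕ) : (fun s d => gd (j + 1) (s + 1) d)
    = fun s d => gd (j + 1) s d + gd j s d := by
  funext s d; simp only [gd, gc, coef_ss_succ]; push_cast; ring

lemma gd_sd_zero : (fun s d => gd 0 s (d + 1)) = fun _ _ => (0 : ℝ≥0∞) := by
  funext s d; simp only [gd, gc, coef_sd_zero]; simp

lemma gd_sd_succ (j : ℕ) : (fun s d => gd (j + 1) s (d + 1))
    = fun s d => gd j s d + gc j s d := by
  funext s d; simp only [gd, gc, coef_sd_succ]; push_cast; ring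

lemma sg_I3 (hM1 : 1 ≤ M) (n : ℕ) :
    ∀ j, sg M n (gd j) = (n.choose j : ℝ≥0∞) * (j : ℝ≥0∞) * (1 - (M : ℝ≥0∞)⁻¹) := by
  induction n with
  | zero => intro j; cases j <;> simp [sg, gd, gc, coef]
  | succ n ih =>
      intro j
      have hI0 := sg_I0 (M := M) hM1 n
      cases j with
      | zero =>
          simp only [sg, gd_ss_zero, gd_sd_zero, sg_zero_fun, mul_zero, add_zero, ih 0]
          simp [collect hM1]
      | succ j =>
          simp only [sg, gd_ss_succ, gd_sd_succ]
          rw [sg_add, sg_add, ih (j + 1), ih j, hI0 j]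
          have hC : (((n + 1).choose (j + 1) : ℕ) : ℝ≥0∞)
              = (n.choose (j + 1) : ℝ≥0∞) + (n.choose j : ℝ≥0∞) := by
            rw [Nat.choose_succ_succ', Nat.cast_add]; exact add_comm _ _
          have hj1 : ((j + 1 : ℕ) : ℝ≥0∞) = (j : ℝ≥0∞) + 1 := by push_cast; ring
          rw [hj1]
          set A := (n.choose (j+1) : ℝ≥0∞)
          set B := (n.choose j : ℝ≥0∞)
          set e := (M:ℝ≥0∞)⁻¹
          calc e * (A * ((j:ℝ≥0∞)+1) * (1-e) + B * (j:ℝ≥0∞) * (1-e))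
                + (1 - e) * (A * ((j:ℝ≥0∞)+1) * (1-e))
                + (1 - e) * (B * (j:ℝ≥0∞) * (1-e) + B)
              = (e * ((A * ((j:ℝ≥0∞)+1) + B * (j:ℝ≥0∞)) * (1-e))
                + (1 - e) * ((A * ((j:ℝ≥0∞)+1) + B * (j:ℝ≥0∞)) * (1-e))) + (1-e) * B := by
                ring
            _ = (A * ((j:ℝ≥0∞)+1) + B * (j:ℝ≥0∞)) * (1-e) + (1-e) * B := by rw [collect hM1]
            _ = (((n + 1).choose (j + 1) : ℕ) : ℝ≥0∞) * ((j:ℝ≥0∞) + 1) * (1-e) := by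
                rw [hC]; ring

lemma gd2_ss_zero : (fun s d => gd2 0 (s + 1) d) = gd2 0 := by
  funext s d; simp only [gd2, gc, coef_ss_zero]

lemma gd2_ss_succ (j : ℕ) : (fun s d => gd2 (j + 1) (s + 1) d)
    = fun s d => gd2 (j + 1) s d + gd2 j s d := by
  funext s d; simp only [gd2, gc, coef_ss_succ]; push_cast; ring

lemma gd2_sd_zero : (fun s d => gd2 0 s (d + 1)) = fun _ _ => (0 : ℝ≥0∞) := by
  funext s d; simp only [gd2, gc, coef_sd_zero]; simp

lemma gd2_sd_succ (j : ℕ) : (fun s d => gd2 (j + 1) s (d + 1))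
    = fun s d => gd2 j s d + 2 * gd j s d := by
  funext s d; simp only [gd2, gd, gc, coef_sd_succ]
  rw [show (d + 1) * (d + 1 - 1) = d * (d - 1) + 2 * d by
    cases d with
    | zero => simp
    | succ d => simp only [Nat.add_sub_cancel, Nat.succ_sub_one]; ring]
  push_cast; ring

lemma sg_I4 (hM1 : 1 ≤ M) (n : ℕ) :
    ∀ j, sg M n (gd2 j) = (n.choose j : ℝ≥0∞) * ((j * (j - 1) : ℕ) : ℝ≥0∞)
      * ((1 - (M : ℝ≥0∞)⁻¹) * (1 - (M : ℝ≥0∞)⁻¹)) := by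
  induction n with
  | zero => intro j; cases j <;> simp [sg, gd2, gc, coef]
  | succ n ih =>
      intro j
      have hI3 := sg_I3 (M := M) hM1 n
      cases j with
      | zero =>
          simp only [sg, gd2_ss_zero, gd2_sd_zero, sg_zero_fun, mul_zero, add_zero, ih 0]
          simp [collect hM1]
      | succ j =>
          have hcast : ((j + 1) * ((j + 1) - 1) : ℕ) = j * (j - 1) + 2 * j := by
            cases j with
            | zero => simp
            | succ j => simp only [Nat.add_sub_cancel, Nat.succ_sub_one]; ring
          have hP : (((j + 1) * ((j + 1) - 1) : ℕ) : ℝ≥0∞)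
              = ((j * (j - 1) : ℕ) : ℝ≥0∞) + ((2 * j : ℕ) : ℝ≥0∞) := by
            rw [hcast, Nat.cast_add]
          have h2j : ((2 * j : ℕ) : ℝ≥0∞) = 2 * (j : ℝ≥0∞) := by
            rw [Nat.cast_mul, Nat.cast_ofNat]
          have hC : (((n + 1).choose (j + 1) : ℕ) : ℝ≥0∞)
              = (n.choose (j + 1) : ℝ≥0∞) + (n.choose j : ℝ≥0∞) := by
            rw [Nat.choose_succ_succ', Nat.cast_add]; exact add_comm _ _
          simp only [sg, gd2_ss_succ, gd2_sd_succ]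
          rw [sg_add, sg_add, sg_smul, ih (j + 1), ih j, hI3 j]
          set A := (n.choose (j+1) : ℝ≥0∞)
          set B := (n.choose j : ℝ≥0∞)
          set e := (M:ℝ≥0∞)⁻¹
          set P1 := (((j+1) * ((j+1) - 1) : ℕ) : ℝ≥0∞)
          set P0 := ((j * (j - 1) : ℕ) : ℝ≥0∞)
          calc e * (A * P1 * ((1-e) * (1-e)) + B * P0 * ((1-e) * (1-e)))
                + (1 - e) * (A * P1 * ((1-e) * (1-e)))
                + (1 - e) * (B * P0 * ((1-e) * (1-e)) + 2 * (B * (j:ℝ≥0∞) * (1-e)))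
              = (e * ((A * P1 + B * P0) * ((1-e) * (1-e)))
                + (1 - e) * ((A * P1 + B * P0) * ((1-e) * (1-e))))
                + B * ((2 * j : ℕ) : ℝ≥0∞) * ((1-e) * (1-e)) := by rw [h2j]; ring
            _ = (A * P1 + B * P0) * ((1-e) * (1-e))
                + B * ((2 * j : ℕ) : ℝ≥0∞) * ((1-e) * (1-e)) := by rw [collect hM1]
            _ = (((n + 1).choose (j + 1) : ℕ) : ℝ≥0∞) * P1 * ((1-e) * (1-e)) := by
                rw [hC, show P1 = P0 + ((2 * j : ℕ) : ℝ≥0∞) from hP]; ring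

end Moments

section Variance

set_option linter.unusedSectionVars false

variable {M : ℕ}

lemma nat_dist_sq_add (x c : ℕ) : Nat.dist x c ^ 2 + 2 * (x * c) = x ^ 2 + c ^ 2 := by
  rcases le_total x c with h | h
  · rw [Nat.dist_eq_sub_of_le h]; zify [h]; ring
  · rw [Nat.dist_eq_sub_of_le_right h]; zify [h]; ring

lemma M_mul_inv (hM1 : 1 ≤ M) : (M : ℝ≥0∞) * (M : ℝ≥0∞)⁻¹ = 1 :=
  ENNReal.mul_inv_cancel (Nat.cast_ne_zero.mpr (by omega)) (ENNReal.natCast_ne_top M)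

lemma eta_eq (hM1 : 1 ≤ M) :
    ((M - 1 : ℕ) : ℝ≥0∞) * (M : ℝ≥0∞)⁻¹ = 1 - (M : ℝ≥0∞)⁻¹ := by
  have he_top : (M : ℝ≥0∞)⁻¹ ≠ ∞ :=
    ENNReal.inv_ne_top.mpr (Nat.cast_ne_zero.mpr (by omega))
  refine ENNReal.eq_sub_of_add_eq he_top ?_
  have : ((M - 1 : ℕ) : ℝ≥0∞) + 1 = (M : ℝ≥0∞) := by
    rw [show ((1 : ℝ≥0∞)) = ((1 : ℕ) : ℝ≥0∞) by simp, ← Nat.cast_add,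
      Nat.sub_add_cancel hM1]
  calc ((M - 1 : ℕ) : ℝ≥0∞) * (M : ℝ≥0∞)⁻¹ + (M : ℝ≥0∞)⁻¹
      = (((M - 1 : ℕ) : ℝ≥0∞) + 1) * (M : ℝ≥0∞)⁻¹ := by ring
    _ = (M : ℝ≥0∞) * (M : ℝ≥0∞)⁻¹ := by rw [this]
    _ = 1 := M_mul_inv hM1

lemma M_mul_eta (hM1 : 1 ≤ M) :
    (M : ℝ≥0∞) * (1 - (M : ℝ≥0∞)⁻¹) = ((M - 1 : ℕ) : ℝ≥0∞) := by
  rw [← eta_eq hM1]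
  calc (M : ℝ≥0∞) * (((M - 1 : ℕ) : ℝ≥0∞) * (M : ℝ≥0∞)⁻¹)
      = ((M - 1 : ℕ) : ℝ≥0∞) * ((M : ℝ≥0∞) * (M : ℝ≥0∞)⁻¹) := by ring
    _ = _ := by rw [M_mul_inv hM1, mul_one]

lemma sg_varS (hM1 : 1 ≤ M) (n j : ℕ) :
    sg M n (fun s d => gc j s d * ((Nat.dist (M * s) n ^ 2 : ℕ) : ℝ≥0∞))
      ≤ (n.choose j : ℝ≥0∞) * ((n * M : ℕ) : ℝ≥0∞) := by
  set C := (n.choose j : ℝ≥0∞) with hC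
  set e := (M : ℝ≥0∞)⁻¹ with he
  -- the three moment values
  have hv1 : sg M n (fun s d => gc j s d * ((2 * (M * s * n) : ℕ) : ℝ≥0∞))
      = 2 * C * (n : ℝ≥0∞) * (n : ℝ≥0∞) := by
    rw [show (fun s d => gc j s d * ((2 * (M * s * n) : ℕ) : ℝ≥0∞))
        = fun s d => (2 * (n : ℝ≥0∞) * (M : ℝ≥0∞)) * ((fun s d => gc j s d * (s : ℝ≥0∞)) s d)
        from funext fun s => funext fun d => by push_cast; ring]
    rw [sg_smul, show (fun (s d : ℕ) => gc j s d * (s : ℝ≥0∞)) = gs j from rfl, sg_I1 hM1]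
    calc 2 * (n : ℝ≥0∞) * (M : ℝ≥0∞) * (C * (n : ℝ≥0∞) * e)
        = 2 * C * (n : ℝ≥0∞) * (n : ℝ≥0∞) * ((M : ℝ≥0∞) * e) := by ring
      _ = _ := by rw [M_mul_inv hM1, mul_one]
  have hv2 : sg M n (fun s d => gc j s d * (((M * s) ^ 2 : ℕ) : ℝ≥0∞))
      = C * ((n * (n - 1) : ℕ) : ℝ≥0∞) + C * (n : ℝ≥0∞) * (M : ℝ≥0∞) := by
    have hs2 : ∀ s : ℕ, (M * s) ^ 2 = M ^ 2 * (s * (s - 1)) + M ^ 2 * s := by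
      intro s
      cases s with
      | zero => simp
      | succ s => simp only [Nat.add_sub_cancel, Nat.succ_sub_one]; ring
    rw [show (fun s d => gc j s d * (((M * s) ^ 2 : ℕ) : ℝ≥0∞))
        = fun s d => ((M : ℝ≥0∞) * (M : ℝ≥0∞)) * ((fun s d => gs2 j s d) s d)
          + ((M : ℝ≥0∞) * (M : ℝ≥0∞)) * ((fun s d => gs j s d) s d)
        from funext fun s => funext fun d => by
          rw [hs2 s]; simp only [gs2, gs]; push_cast; ring]
    rw [sg_add, sg_smul, sg_smul, sg_I1 hM1, sg_I2 hM1]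
    calc (M : ℝ≥0∞) * (M : ℝ≥0∞) * (C * ((n * (n - 1) : ℕ) : ℝ≥0∞) * (e * e))
          + (M : ℝ≥0∞) * (M : ℝ≥0∞) * (C * (n : ℝ≥0∞) * e)
        = C * ((n * (n - 1) : ℕ) : ℝ≥0∞) * (((M : ℝ≥0∞) * e) * ((M : ℝ≥0∞) * e))
          + C * (n : ℝ≥0∞) * (M : ℝ≥0∞) * ((M : ℝ≥0∞) * e) := by ring
      _ = _ := by rw [M_mul_inv hM1]; ring
  have hv3 : sg M n (fun s d => gc j s d * ((n ^ 2 : ℕ) : ℝ≥0∞))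
      = ((n ^ 2 : ℕ) : ℝ≥0∞) * C := by
    rw [show (fun s d => gc j s d * ((n ^ 2 : ℕ) : ℝ≥0∞))
        = fun s d => ((n ^ 2 : ℕ) : ℝ≥0∞) * ((fun s d => gc j s d) s d)
        from funext fun s => funext fun d => by ring]
    rw [sg_smul, show (fun (s d : ℕ) => gc j s d) = gc j from rfl, sg_I0 hM1]
  -- key identity
  have key : sg M n (fun s d => gc j s d * ((Nat.dist (M * s) n ^ 2 : ℕ) : ℝ≥0∞))
      + sg M n (fun s d => gc j s d * ((2 * (M * s * n) : ℕ) : ℝ≥0∞))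
      = sg M n (fun s d => gc j s d * (((M * s) ^ 2 : ℕ) : ℝ≥0∞))
      + sg M n (fun s d => gc j s d * ((n ^ 2 : ℕ) : ℝ≥0∞)) := by
    rw [← sg_add, ← sg_add]
    congr 1
    funext s d
    rw [← mul_add, ← mul_add, ← Nat.cast_add, ← Nat.cast_add,
      show Nat.dist (M * s) n ^ 2 + 2 * (M * s * n) = (M * s) ^ 2 + n ^ 2 from
        nat_dist_sq_add (M * s) n]
  rw [hv1, hv2, hv3] at key
  have hfin : 2 * C * (n : ℝ≥0∞) * (n : ℝ≥0∞) ≠ ∞ := by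
    refine ENNReal.mul_ne_top (ENNReal.mul_ne_top (ENNReal.mul_ne_top ?_ ?_) ?_) ?_ <;>
      simp [hC]
  rw [← ENNReal.add_le_add_iff_right hfin, key]
  have h1 : ((n * (n - 1) : ℕ) : ℝ≥0∞) ≤ (n : ℝ≥0∞) * (n : ℝ≥0∞) := by
    rw [← Nat.cast_mul]
    exact_mod_cast Nat.mul_le_mul_left n (Nat.sub_le n 1)
  have h2 : (n : ℝ≥0∞) * (M : ℝ≥0∞) = ((n * M : ℕ) : ℝ≥0∞) := by rw [Nat.cast_mul]
  have h3 : ((n ^ 2 : ℕ) : ℝ≥0∞) = (n : ℝ≥0∞) * (n : ℝ≥0∞) := by push_cast; ring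
  calc C * ((n * (n - 1) : ℕ) : ℝ≥0∞) + C * (n : ℝ≥0∞) * (M : ℝ≥0∞) + ((n ^ 2 : ℕ) : ℝ≥0∞) * C
      ≤ C * ((n : ℝ≥0∞) * (n : ℝ≥0∞)) + C * (n : ℝ≥0∞) * (M : ℝ≥0∞)
        + ((n : ℝ≥0∞) * (n : ℝ≥0∞)) * C :=
        add_le_add (add_le_add (mul_le_mul_right h1 C) le_rfl) (le_of_eq (by rw [h3]))
    _ = C * ((n * M : ℕ) : ℝ≥0∞) + 2 * C * (n : ℝ≥0∞) * (n : ℝ≥0∞) := by rw [← h2]; ring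

lemma nat_var_d (hM1 : 1 ≤ M) (j : ℕ) :
    j * (j - 1) * ((M - 1) * (M - 1)) + j * M * (M - 1) + ((M - 1) * j) ^ 2
      ≤ 2 * (((M - 1) * j) * (j * (M - 1))) + j * M := by
  obtain ⟨a, rfl⟩ : ∃ a, M = a + 1 := ⟨M - 1, by omega⟩
  simp only [Nat.add_sub_cancel]
  cases j with
  | zero => simp
  | succ b =>
      simp only [Nat.add_sub_cancel]
      nlinarith [sq_nonneg (a * (b + 1)), Nat.zero_le a, Nat.zero_le b]

lemma sg_varD (hM1 : 1 ≤ M) (n j : ℕ) :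
    sg M n (fun s d => gc j s d * ((Nat.dist (M * d) ((M - 1) * j) ^ 2 : ℕ) : ℝ≥0∞))
      ≤ (n.choose j : ℝ≥0∞) * ((j * M : ℕ) : ℝ≥0∞) := by
  set C := (n.choose j : ℝ≥0∞) with hC
  set e := (M : ℝ≥0∞)⁻¹ with he
  have hv1 : sg M n (fun s d => gc j s d * ((2 * (M * d * ((M - 1) * j)) : ℕ) : ℝ≥0∞))
      = 2 * (((M - 1 : ℕ) : ℝ≥0∞) * (j : ℝ≥0∞)) * (C * (j : ℝ≥0∞) * ((M - 1 : ℕ) : ℝ≥0∞)) := by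
    rw [show (fun s d => gc j s d * ((2 * (M * d * ((M - 1) * j)) : ℕ) : ℝ≥0∞))
        = fun s d => (2 * ((M - 1 : ℕ) : ℝ≥0∞) * (j : ℝ≥0∞) * (M : ℝ≥0∞))
            * ((fun s d => gd j s d) s d)
        from funext fun s => funext fun d => by simp only [gd]; push_cast; ring]
    rw [sg_smul, show (fun (s d : ℕ) => gd j s d) = gd j from rfl, sg_I3 hM1]
    calc 2 * ((M - 1 : ℕ) : ℝ≥0∞) * (j : ℝ≥0∞) * (M : ℝ≥0∞) * (C * (j : ℝ≥0∞) * (1 - e))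
        = 2 * (((M - 1 : ℕ) : ℝ≥0∞) * (j : ℝ≥0∞)) * (C * (j : ℝ≥0∞))
            * ((M : ℝ≥0∞) * (1 - e)) := by ring
      _ = _ := by rw [M_mul_eta hM1]; ring
  have hv2 : sg M n (fun s d => gc j s d * (((M * d) ^ 2 : ℕ) : ℝ≥0∞))
      = C * ((j * (j - 1) : ℕ) : ℝ≥0∞) * (((M - 1 : ℕ) : ℝ≥0∞) * ((M - 1 : ℕ) : ℝ≥0∞))
        + C * (j : ℝ≥0∞) * (M : ℝ≥0∞) * ((M - 1 : ℕ) : ℝ≥0∞) := by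
    have hd2 : ∀ d : ℕ, (M * d) ^ 2 = M ^ 2 * (d * (d - 1)) + M ^ 2 * d := by
      intro d
      cases d with
      | zero => simp
      | succ d => simp only [Nat.add_sub_cancel, Nat.succ_sub_one]; ring
    rw [show (fun s d => gc j s d * (((M * d) ^ 2 : ℕ) : ℝ≥0∞))
        = fun s d => ((M : ℝ≥0∞) * (M : ℝ≥0∞)) * ((fun s d => gd2 j s d) s d)
          + ((M : ℝ≥0∞) * (M : ℝ≥0∞)) * ((fun s d => gd j s d) s d)
        from funext fun s => funext fun d => by
          rw [hd2 d]; simp only [gd2, gd]; push_cast; ring]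
    rw [sg_add, sg_smul, sg_smul, sg_I3 hM1, sg_I4 hM1]
    calc (M : ℝ≥0∞) * (M : ℝ≥0∞) * (C * ((j * (j - 1) : ℕ) : ℝ≥0∞) * ((1 - e) * (1 - e)))
          + (M : ℝ≥0∞) * (M : ℝ≥0∞) * (C * (j : ℝ≥0∞) * (1 - e))
        = C * ((j * (j - 1) : ℕ) : ℝ≥0∞) * (((M : ℝ≥0∞) * (1 - e)) * ((M : ℝ≥0∞) * (1 - e)))
          + C * (j : ℝ≥0∞) * (M : ℝ≥0∞) * ((M : ℝ≥0∞) * (1 - e)) := by ring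
      _ = _ := by rw [M_mul_eta hM1]
  have hv3 : sg M n (fun s d => gc j s d * (((((M - 1) * j)) ^ 2 : ℕ) : ℝ≥0∞))
      = ((((M - 1) * j) ^ 2 : ℕ) : ℝ≥0∞) * C := by
    rw [show (fun s d => gc j s d * (((((M - 1) * j)) ^ 2 : ℕ) : ℝ≥0∞))
        = fun s d => ((((M - 1) * j) ^ 2 : ℕ) : ℝ≥0∞) * ((fun s d => gc j s d) s d)
        from funext fun s => funext fun d => by ring]
    rw [sg_smul, show (fun (s d : ℕ) => gc j s d) = gc j from rfl, sg_I0 hM1]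
  have key : sg M n (fun s d => gc j s d * ((Nat.dist (M * d) ((M - 1) * j) ^ 2 : ℕ) : ℝ≥0∞))
      + sg M n (fun s d => gc j s d * ((2 * (M * d * ((M - 1) * j)) : ℕ) : ℝ≥0∞))
      = sg M n (fun s d => gc j s d * (((M * d) ^ 2 : ℕ) : ℝ≥0∞))
      + sg M n (fun s d => gc j s d * (((((M - 1) * j)) ^ 2 : ℕ) : ℝ≥0∞)) := by
    rw [← sg_add, ← sg_add]
    congr 1
    funext s d
    rw [← mul_add, ← mul_add, ← Nat.cast_add, ← Nat.cast_add,
      nat_dist_sq_add (M * d) ((M - 1) * j)]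
  rw [hv1, hv2, hv3] at key
  have hfin : 2 * (((M - 1 : ℕ) : ℝ≥0∞) * (j : ℝ≥0∞))
      * (C * (j : ℝ≥0∞) * ((M - 1 : ℕ) : ℝ≥0∞)) ≠ ∞ :=
    ENNReal.mul_ne_top
      (ENNReal.mul_ne_top ENNReal.ofNat_ne_top
        (ENNReal.mul_ne_top (ENNReal.natCast_ne_top _) (ENNReal.natCast_ne_top _)))
      (ENNReal.mul_ne_top
        (ENNReal.mul_ne_top (by rw [hC]; exact ENNReal.natCast_ne_top _)
          (ENNReal.natCast_ne_top _))
        (ENNReal.natCast_ne_top _))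
  rw [← ENNReal.add_le_add_iff_right hfin, key]
  -- now a pure cast inequality
  have hcast : ∀ a b : ℕ, a ≤ b → ((a : ℕ) : ℝ≥0∞) ≤ ((b : ℕ) : ℝ≥0∞) := by
    intro a b hab; exact_mod_cast hab
  calc C * ((j * (j - 1) : ℕ) : ℝ≥0∞) * (((M - 1 : ℕ) : ℝ≥0∞) * ((M - 1 : ℕ) : ℝ≥0∞))
        + C * (j : ℝ≥0∞) * (M : ℝ≥0∞) * ((M - 1 : ℕ) : ℝ≥0∞)
        + ((((M - 1) * j) ^ 2 : ℕ) : ℝ≥0∞) * C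
      = C * (((j * (j - 1) * ((M - 1) * (M - 1)) + j * M * (M - 1) + ((M - 1) * j) ^ 2 : ℕ))
          : ℝ≥0∞) := by push_cast; ring
    _ ≤ C * (((2 * (((M - 1) * j) * (j * (M - 1))) + j * M : ℕ)) : ℝ≥0∞) :=
        mul_le_mul_right (hcast _ _ (nat_var_d hM1 j)) C
    _ = C * ((j * M : ℕ) : ℝ≥0∞) + 2 * (((M - 1 : ℕ) : ℝ≥0∞) * (j : ℝ≥0∞))
        * (C * (j : ℝ≥0∞) * ((M - 1 : ℕ) : ℝ≥0∞)) := by push_cast; ring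

end Variance

section GoodSet

lemma dist_le_both {a b t : ℕ} (h : Nat.dist a b ≤ t) : a ≤ b + t ∧ b ≤ a + t := by
  rw [Nat.dist] at h
  omega

lemma choose_core (m s d j : ℕ) (hdj : d ≤ j) (hus : j - d ≤ s)
    (hscalar : (m - 10) * ((j - d) + 1) ≤ m * (s - (j - d))) :
    (m - 10) * (coef j s d * (2 * j).choose (j + 1))
      ≤ m * (coef (j + 1) s d * (2 * j).choose j) := by
  obtain ⟨u, hu⟩ : ∃ u, u = j - d := ⟨_, rfl⟩
  rw [← hu] at hscalar
  have hc1 : coef j s d = s.choose u := by unfold coef; rw [if_pos hdj, ← hu]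
  have hc2 : coef (j + 1) s d = s.choose (u + 1) := by
    unfold coef
    rw [if_pos (by omega)]
    congr 1
    omega
  rw [hc1, hc2]
  have hpos : 0 < (u + 1) * (j + 1) := by positivity
  apply Nat.le_of_mul_le_mul_right _ hpos
  have k1 : s.choose (u + 1) * (u + 1) = s.choose u * (s - u) := Nat.choose_succ_right_eq s u
  have k2 : (2 * j).choose (j + 1) * (j + 1) = (2 * j).choose j * (2 * j - j) :=
    Nat.choose_succ_right_eq (2 * j) j
  have hjj : 2 * j - j = j := by omega
  calc (m - 10) * (s.choose u * (2 * j).choose (j + 1)) * ((u + 1) * (j + 1))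
      = s.choose u * ((2 * j).choose (j + 1) * (j + 1)) * ((m - 10) * (u + 1)) := by ring
    _ = s.choose u * ((2 * j).choose j * j) * ((m - 10) * (u + 1)) := by rw [k2, hjj]
    _ ≤ s.choose u * ((2 * j).choose j * (j + 1)) * (m * (s - u)) := by
        refine Nat.mul_le_mul ?_ hscalar
        refine Nat.mul_le_mul_left _ ?_
        exact Nat.mul_le_mul_left _ (by omega)
    _ = m * ((s.choose u * (s - u)) * (2 * j).choose j) * (j + 1) := by ring
    _ = m * ((s.choose (u + 1) * (u + 1)) * (2 * j).choose j) * (j + 1) := by rw [k1]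
    _ = m * (s.choose (u + 1) * (2 * j).choose j) * ((u + 1) * (j + 1)) := by ring

lemma good_scalar (M m s d : ℕ) (hM1 : 1 ≤ M) (hm : 100 ≤ m)
    (hs : Nat.dist (M * s) (2 * (M * m ^ 4)) ≤ M * m ^ 3)
    (hd : Nat.dist (M * d) ((M - 1) * (M * m ^ 4)) ≤ M * m ^ 3) :
    d ≤ M * m ^ 4 ∧ (M * m ^ 4) - d ≤ s ∧
      (m - 10) * (((M * m ^ 4) - d) + 1) ≤ m * (s - ((M * m ^ 4) - d)) := by
  have hM0 : 0 < M := hM1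
  obtain ⟨hs1, hs2⟩ := dist_le_both hs
  obtain ⟨hd1, hd2⟩ := dist_le_both hd
  -- divide by M
  have hsu : s ≤ 2 * m ^ 4 + m ^ 3 := by
    refine Nat.le_of_mul_le_mul_left ?_ hM0
    calc M * s ≤ 2 * (M * m ^ 4) + M * m ^ 3 := hs1
      _ = M * (2 * m ^ 4 + m ^ 3) := by ring
  have hsl : 2 * m ^ 4 ≤ s + m ^ 3 := by
    refine Nat.le_of_mul_le_mul_left ?_ hM0
    calc M * (2 * m ^ 4) = 2 * (M * m ^ 4) := by ring
      _ ≤ M * s + M * m ^ 3 := hs2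
      _ = M * (s + m ^ 3) := by ring
  have hdu : d ≤ (M - 1) * m ^ 4 + m ^ 3 := by
    refine Nat.le_of_mul_le_mul_left ?_ hM0
    calc M * d ≤ (M - 1) * (M * m ^ 4) + M * m ^ 3 := hd1
      _ = M * ((M - 1) * m ^ 4 + m ^ 3) := by ring
  have hdl : (M - 1) * m ^ 4 ≤ d + m ^ 3 := by
    refine Nat.le_of_mul_le_mul_left ?_ hM0
    calc M * ((M - 1) * m ^ 4) = (M - 1) * (M * m ^ 4) := by ring
      _ ≤ M * d + M * m ^ 3 := hd2
      _ = M * (d + m ^ 3) := by ring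
  have hM' : M - 1 + 1 = M := by omega
  have hwrit : M * m ^ 4 = (M - 1) * m ^ 4 + m ^ 4 := by
    calc M * m ^ 4 = (M - 1 + 1) * m ^ 4 := by rw [hM']
      _ = (M - 1) * m ^ 4 + m ^ 4 := by ring
  have h34 : m ^ 3 ≤ m ^ 4 := Nat.pow_le_pow_right (by omega) (by omega)
  have hdj : d ≤ M * m ^ 4 := by
    calc d ≤ (M - 1) * m ^ 4 + m ^ 3 := hdu
      _ ≤ (M - 1) * m ^ 4 + m ^ 4 := by omega
      _ = M * m ^ 4 := hwrit.symm
  have hjd : M * m ^ 4 ≤ d + (m ^ 4 + m ^ 3) := by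
    calc M * m ^ 4 = (M - 1) * m ^ 4 + m ^ 4 := hwrit
      _ ≤ (d + m ^ 3) + m ^ 4 := by omega
      _ = d + (m ^ 4 + m ^ 3) := by ring
  -- now remove M entirely; work with u := M * m^4 - d
  set u := M * m ^ 4 - d with hu
  have huu : u ≤ m ^ 4 + m ^ 3 := by omega
  have h2m3 : 2 * m ^ 3 ≤ m ^ 4 := by
    calc 2 * m ^ 3 ≤ m * m ^ 3 := Nat.mul_le_mul_right _ (by omega)
      _ = m ^ 4 := by ring
  have hP31 : 1 ≤ m ^ 3 := Nat.one_le_pow _ _ (by omega)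
  have hus : u ≤ s := by omega
  have hsub : m ^ 4 ≤ (s - u) + 2 * m ^ 3 := by omega
  refine ⟨hdj, hus, ?_⟩
  have h10 : 10 ≤ m := by omega
  have step2 : (m - 10) * ((m ^ 4 + m ^ 3) + 1) ≤ m * (m ^ 4 - 2 * m ^ 3) := by
    zify [h10, h2m3]
    have h3 : (1 : ℤ) ≤ (m : ℤ) ^ 3 := by exact_mod_cast hP31
    have h0 : (0 : ℤ) ≤ (m : ℤ) := by positivity
    have h4 : (m : ℤ) ≤ (m : ℤ) ^ 4 := by nlinarith [h3, h0]
    have h3' : (0 : ℤ) ≤ (m : ℤ) ^ 3 := by positivity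
    have h4' : (0 : ℤ) ≤ (m : ℤ) ^ 4 := by positivity
    ring_nf
    linarith [h4, h3', h4']
  calc (m - 10) * (u + 1) ≤ (m - 10) * ((m ^ 4 + m ^ 3) + 1) :=
        Nat.mul_le_mul_left _ (by omega)
    _ ≤ m * (m ^ 4 - 2 * m ^ 3) := step2
    _ ≤ m * (s - u) := Nat.mul_le_mul_left _ (by omega)

lemma good_core (M m s d : ℕ) (hM1 : 1 ≤ M) (hm : 100 ≤ m)
    (hs : Nat.dist (M * s) (2 * (M * m ^ 4)) ≤ M * m ^ 3)
    (hd : Nat.dist (M * d) ((M - 1) * (M * m ^ 4)) ≤ M * m ^ 3) :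
    (m - 10) * (coef (M * m ^ 4) s d * (2 * (M * m ^ 4)).choose (M * m ^ 4 + 1))
      ≤ m * (coef (M * m ^ 4 + 1) s d * (2 * (M * m ^ 4)).choose (M * m ^ 4)) := by
  obtain ⟨h1, h2, h3⟩ := good_scalar M m s d hM1 hm hs hd
  exact choose_core m s d (M * m ^ 4) h1 h2 h3

end GoodSet

section MeetBound

open scoped Classical
set_option linter.unusedSectionVars false

variable [Countable G] [MeasurableSpace G] [MeasurableSingletonClass G]

variable {K : G → Measure G} {l M : ℕ}
variable (hK : ∀ x, IsProbabilityMeasure (K x))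
variable (hM : ∀ x, (M : ℝ≥0∞)⁻¹ < mm K l x)
variable (hM1 : 1 ≤ M)

set_option maxHeartbeats 2000000 in
include hK hM hM1 in
lemma meet_bound (m : ℕ) (hm : 100 ≤ m) (x : G) :
    (m : ℝ≥0∞) ^ 3 ≤ (m : ℝ≥0∞) ^ 3
        * meetMass (nStep K (2 * (M * m ^ 4) * l + M * m ^ 4) x)
          (nStep K (2 * (M * m ^ 4) * l + (M * m ^ 4 + 1)) x)
      + 13 * (m : ℝ≥0∞) ^ 2 := by
  have hm1 : 1 ≤ m := by omega
  have hQ1 : 1 ≤ M * m ^ 4 := Nat.one_le_iff_ne_zero.mpr (by positivity)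
  set n := 2 * (M * m ^ 4) with hn
  set j := M * m ^ 4 with hj
  set Cj := ((n.choose j : ℕ) : ℝ≥0∞) with hCj
  set Cj1 := ((n.choose (j + 1) : ℕ) : ℝ≥0∞) with hCj1
  set mc := (m : ℝ≥0∞) with hmc
  set meet := meetMass (nStep K (n * l + j) x) (nStep K (n * l + (j + 1)) x) with hmeet
  have hmeet_eq : meet = ∑' y, min (pk K (n * l + j) x y) (pk K (n * l + (j + 1)) x y) := by
    rw [hmeet]; rfl
  set gmin : ℕ → ℕ → ℝ≥0∞ :=
    fun s d => min (gc j s d * Cj1) (gc (j + 1) s d * Cj) with hgmin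
  set gb1 : ℕ → ℕ → ℝ≥0∞ :=
    fun s d => gc j s d * (if M * m ^ 3 < Nat.dist (M * s) n then 1 else 0) with hgb1
  set gb2 : ℕ → ℕ → ℝ≥0∞ :=
    fun s d => gc j s d * (if M * m ^ 3 < Nat.dist (M * d) ((M - 1) * j) then 1 else 0)
    with hgb2
  set ggood : ℕ → ℕ → ℝ≥0∞ :=
    fun s d => gc j s d * (if Nat.dist (M * s) n ≤ M * m ^ 3
      ∧ Nat.dist (M * d) ((M - 1) * j) ≤ M * m ^ 3 then 1 else 0) with hggood
  clear_value n j Cj Cj1 mc meet gmin gb1 gb2 ggood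
  have hjn : j ≤ n := by omega
  have hj1n : j + 1 ≤ n := by omega
  -- Step (c): sg gmin ≤ Cj * Cj1 * meet
  have stepC : sg M n gmin ≤ Cj * Cj1 * meet := by
    rw [← Phi_mass hK hM n gmin x, hmeet_eq, ← ENNReal.tsum_mul_left]
    refine ENNReal.tsum_le_tsum fun y => ?_
    rcases le_total (pk K (n * l + j) x y) (pk K (n * l + (j + 1)) x y) with h | h
    · rw [min_eq_left h]
      calc Phi K l M n gmin x y ≤ Phi K l M n (fun s d => Cj1 * gc j s d) x y := by
            refine Phi_mono (fun s d => ?_) n x y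
            rw [hgmin]
            exact (min_le_left _ _).trans_eq (mul_comm _ _)
        _ = Cj1 * (Cj * pk K (n * l + j) x y) := by
            rw [Phi_smul, ← main_identity hK hM n j x y, hCj]
        _ = Cj * Cj1 * pk K (n * l + j) x y := by ring
    · rw [min_eq_right h]
      calc Phi K l M n gmin x y ≤ Phi K l M n (fun s d => Cj * gc (j + 1) s d) x y := by
            refine Phi_mono (fun s d => ?_) n x y
            rw [hgmin]
            exact (min_le_right _ _).trans_eq (mul_comm _ _)
        _ = Cj * (Cj1 * pk K (n * l + (j + 1)) x y) := by
            rw [Phi_smul, ← main_identity hK hM n (j + 1) x y, hCj1]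
        _ = Cj * Cj1 * pk K (n * l + (j + 1)) x y := by ring
  -- Step (d): Chebyshev bounds
  have hsq : (((M * m ^ 3) ^ 2 : ℕ) : ℝ≥0∞) = mc ^ 2 * ((M ^ 2 * m ^ 4 : ℕ) : ℝ≥0∞) := by
    rw [show (M * m ^ 3) ^ 2 = m ^ 2 * (M ^ 2 * m ^ 4) by ring, Nat.cast_mul, hmc]
    push_cast
    ring
  have cheb1 : (mc ^ 2 * sg M n gb1) * ((M ^ 2 * m ^ 4 : ℕ) : ℝ≥0∞)
      ≤ (2 * Cj) * ((M ^ 2 * m ^ 4 : ℕ) : ℝ≥0∞) := by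
    have h1 : (((M * m ^ 3) ^ 2 : ℕ) : ℝ≥0∞) * sg M n gb1
        ≤ Cj * ((n * M : ℕ) : ℝ≥0∞) := by
      rw [← sg_smul]
      refine (sg_mono (fun s d => ?_) n).trans (by rw [hCj]; exact sg_varS hM1 n j)
      rw [hgb1]
      by_cases hb : M * m ^ 3 < Nat.dist (M * s) n
      · simp only [if_pos hb, mul_one]
        rw [mul_comm]
        refine mul_le_mul_right ?_ _
        exact_mod_cast Nat.pow_le_pow_left (le_of_lt hb) 2
      · simp [if_neg hb]
    calc (mc ^ 2 * sg M n gb1) * ((M ^ 2 * m ^ 4 : ℕ) : ℝ≥0∞)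
        = (((M * m ^ 3) ^ 2 : ℕ) : ℝ≥0∞) * sg M n gb1 := by rw [hsq]; ring
      _ ≤ Cj * ((n * M : ℕ) : ℝ≥0∞) := h1
      _ = (2 * Cj) * ((M ^ 2 * m ^ 4 : ℕ) : ℝ≥0∞) := by
          rw [show n * M = 2 * (M ^ 2 * m ^ 4) by rw [hn, hj]; ring, Nat.cast_mul]
          push_cast
          ring
  have cheb2 : (mc ^ 2 * sg M n gb2) * ((M ^ 2 * m ^ 4 : ℕ) : ℝ≥0∞)
      ≤ Cj * ((M ^ 2 * m ^ 4 : ℕ) : ℝ≥0∞) := by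
    have h1 : (((M * m ^ 3) ^ 2 : ℕ) : ℝ≥0∞) * sg M n gb2
        ≤ Cj * ((j * M : ℕ) : ℝ≥0∞) := by
      rw [← sg_smul]
      refine (sg_mono (fun s d => ?_) n).trans (by rw [hCj]; exact sg_varD hM1 n j)
      rw [hgb2]
      by_cases hb : M * m ^ 3 < Nat.dist (M * d) ((M - 1) * j)
      · simp only [if_pos hb, mul_one]
        rw [mul_comm]
        refine mul_le_mul_right ?_ _
        exact_mod_cast Nat.pow_le_pow_left (le_of_lt hb) 2
      · simp [if_neg hb]
    calc (mc ^ 2 * sg M n gb2) * ((M ^ 2 * m ^ 4 : ℕ) : ℝ≥0∞)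
        = (((M * m ^ 3) ^ 2 : ℕ) : ℝ≥0∞) * sg M n gb2 := by rw [hsq]; ring
      _ ≤ Cj * ((j * M : ℕ) : ℝ≥0∞) := h1
      _ = Cj * ((M ^ 2 * m ^ 4 : ℕ) : ℝ≥0∞) := by
          rw [show j * M = M ^ 2 * m ^ 4 by rw [hj]; ring]
  have hMm4 : ((M ^ 2 * m ^ 4 : ℕ) : ℝ≥0∞) ≠ 0 := by
    simp only [ne_eq, Nat.cast_eq_zero]
    positivity
  have hMm4t : ((M ^ 2 * m ^ 4 : ℕ) : ℝ≥0∞) ≠ ∞ := ENNReal.natCast_ne_top _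
  have cheb1' : mc ^ 2 * sg M n gb1 ≤ 2 * Cj :=
    (ENNReal.mul_le_mul_iff_left hMm4 hMm4t).mp cheb1
  have cheb2' : mc ^ 2 * sg M n gb2 ≤ Cj :=
    (ENNReal.mul_le_mul_iff_left hMm4 hMm4t).mp cheb2
  -- Step (e): splitting Cj into good and bad parts
  have stepE : Cj ≤ sg M n ggood + (sg M n gb1 + sg M n gb2) := by
    have h0 : Cj = sg M n (gc j) := by rw [hCj]; exact (sg_I0 hM1 n j).symm
    rw [h0, ← sg_add, ← sg_add]
    refine sg_mono (fun s d => ?_) n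
    simp only [hggood, hgb1, hgb2]
    by_cases h1 : M * m ^ 3 < Nat.dist (M * s) n
    · refine le_trans ?_ (self_le_add_left _ _)
      refine le_trans ?_ (self_le_add_right _ _)
      exact le_of_eq (by rw [if_pos h1, mul_one])
    · by_cases h2 : M * m ^ 3 < Nat.dist (M * d) ((M - 1) * j)
      · refine le_trans ?_ (self_le_add_left _ _)
        refine le_trans ?_ (self_le_add_left _ _)
        exact le_of_eq (by rw [if_pos h2, mul_one])
      · refine le_trans ?_ (self_le_add_right _ _)
        exact le_of_eq (by rw [if_pos ⟨not_lt.mp h1, not_lt.mp h2⟩, mul_one])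
  -- Step (f): ratio bound on the good set
  have hratio : ∀ s d, ((m - 10 : ℕ) : ℝ≥0∞) * (Cj1 * ggood s d) ≤ mc * gmin s d := by
    intro s d
    simp only [hggood, hgmin]
    by_cases hg : Nat.dist (M * s) n ≤ M * m ^ 3
        ∧ Nat.dist (M * d) ((M - 1) * j) ≤ M * m ^ 3
    · rw [if_pos hg, mul_one]
      have hs' : Nat.dist (M * s) (2 * (M * m ^ 4)) ≤ M * m ^ 3 := by
        have h := hg.1; rw [hn, hj] at h; exact h
      have hd' : Nat.dist (M * d) ((M - 1) * (M * m ^ 4)) ≤ M * m ^ 3 := by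
        have h := hg.2; rw [hj] at h; exact h
      have hcore := good_core M m s d hM1 hm hs' hd'
      have hcast : (((m - 10) * (coef (M * m ^ 4) s d
          * (2 * (M * m ^ 4)).choose (M * m ^ 4 + 1)) : ℕ) : ℝ≥0∞)
          ≤ (((m * (coef (M * m ^ 4 + 1) s d
          * (2 * (M * m ^ 4)).choose (M * m ^ 4)) : ℕ) : ℝ≥0∞)) := Nat.cast_le.mpr hcore
      have hb2 : ((m - 10 : ℕ) : ℝ≥0∞) * (Cj1 * gc j s d)
          ≤ mc * (gc (j + 1) s d * Cj) := by
        calc ((m - 10 : ℕ) : ℝ≥0∞) * (Cj1 * gc j s d)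
            = (((m - 10) * (coef (M * m ^ 4) s d
                * (2 * (M * m ^ 4)).choose (M * m ^ 4 + 1)) : ℕ) : ℝ≥0∞) := by
              simp only [Nat.cast_mul, gc]
              rw [hCj1, hn, hj]
              try ring
          _ ≤ _ := hcast
          _ = mc * (gc (j + 1) s d * Cj) := by
              simp only [Nat.cast_mul, gc]
              rw [hCj, hmc, hn, hj]
              try ring
      have hb1 : ((m - 10 : ℕ) : ℝ≥0∞) * (Cj1 * gc j s d)
          ≤ mc * (gc j s d * Cj1) := by
        rw [hmc]
        calc ((m - 10 : ℕ) : ℝ≥0∞) * (Cj1 * gc j s d)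
            ≤ (m : ℝ≥0∞) * (Cj1 * gc j s d) := by
              refine mul_le_mul_left ?_ _
              exact_mod_cast Nat.sub_le m 10
          _ = (m : ℝ≥0∞) * (gc j s d * Cj1) := by ring
      rcases le_total (gc j s d * Cj1) (gc (j + 1) s d * Cj) with h | h
      · rw [min_eq_left h]; exact hb1
      · rw [min_eq_right h]; exact hb2
    · rw [if_neg hg, mul_zero, mul_zero, mul_zero]
      exact zero_le
  have stepF : ((m - 10 : ℕ) : ℝ≥0∞) * Cj1 * sg M n ggood ≤ mc * sg M n gmin := by
    have e1 : (fun (s d : ℕ) => ((m - 10 : ℕ) : ℝ≥0∞) * (Cj1 * ggood s d))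
        = fun s d => (((m - 10 : ℕ) : ℝ≥0∞) * Cj1) * ggood s d := by
      funext s d; ring
    calc ((m - 10 : ℕ) : ℝ≥0∞) * Cj1 * sg M n ggood
        = sg M n (fun s d => ((m - 10 : ℕ) : ℝ≥0∞) * (Cj1 * ggood s d)) := by
          rw [e1, sg_smul]
      _ ≤ sg M n (fun s d => mc * gmin s d) := sg_mono hratio n
      _ = mc * sg M n gmin := sg_smul mc gmin n
  -- Final assembly
  have key1 : ((m - 10 : ℕ) : ℝ≥0∞) * Cj1 * (mc ^ 2 * sg M n ggood)
      ≤ mc ^ 3 * (Cj * Cj1 * meet) := by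
    calc ((m - 10 : ℕ) : ℝ≥0∞) * Cj1 * (mc ^ 2 * sg M n ggood)
        = mc ^ 2 * (((m - 10 : ℕ) : ℝ≥0∞) * Cj1 * sg M n ggood) := by ring
      _ ≤ mc ^ 2 * (mc * sg M n gmin) := mul_le_mul_right stepF _
      _ ≤ mc ^ 2 * (mc * (Cj * Cj1 * meet)) := by
          exact mul_le_mul_right (mul_le_mul_right stepC _) _
      _ = mc ^ 3 * (Cj * Cj1 * meet) := by ring
  have key2 : mc ^ 2 * Cj ≤ mc ^ 2 * sg M n ggood + 3 * Cj := by
    calc mc ^ 2 * Cj ≤ mc ^ 2 * (sg M n ggood + (sg M n gb1 + sg M n gb2)) :=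
          mul_le_mul_right stepE _
      _ = mc ^ 2 * sg M n ggood + (mc ^ 2 * sg M n gb1 + mc ^ 2 * sg M n gb2) := by ring
      _ ≤ mc ^ 2 * sg M n ggood + (2 * Cj + Cj) :=
          add_le_add_right (add_le_add cheb1' cheb2') _
      _ = mc ^ 2 * sg M n ggood + 3 * Cj := by ring
  have key3 : ((m - 10 : ℕ) : ℝ≥0∞) * mc ^ 2 * (Cj * Cj1)
      ≤ mc ^ 3 * (Cj * Cj1 * meet) + 3 * (((m - 10 : ℕ) : ℝ≥0∞) * (Cj * Cj1)) := by
    calc ((m - 10 : ℕ) : ℝ≥0∞) * mc ^ 2 * (Cj * Cj1)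
        = ((m - 10 : ℕ) : ℝ≥0∞) * Cj1 * (mc ^ 2 * Cj) := by ring
      _ ≤ ((m - 10 : ℕ) : ℝ≥0∞) * Cj1 * (mc ^ 2 * sg M n ggood + 3 * Cj) :=
          mul_le_mul_right key2 _
      _ = ((m - 10 : ℕ) : ℝ≥0∞) * Cj1 * (mc ^ 2 * sg M n ggood)
          + 3 * (((m - 10 : ℕ) : ℝ≥0∞) * (Cj * Cj1)) := by ring
      _ ≤ mc ^ 3 * (Cj * Cj1 * meet) + 3 * (((m - 10 : ℕ) : ℝ≥0∞) * (Cj * Cj1)) :=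
          add_le_add_left key1 _
  -- cancel Cj * Cj1
  have hCC0 : Cj * Cj1 ≠ 0 := by
    rw [hCj, hCj1]
    simp only [ne_eq, mul_eq_zero, Nat.cast_eq_zero]
    push_neg
    exact ⟨(Nat.choose_pos hjn).ne', (Nat.choose_pos hj1n).ne'⟩
  have hCCt : Cj * Cj1 ≠ ∞ :=
    ENNReal.mul_ne_top (by rw [hCj]; exact ENNReal.natCast_ne_top _)
      (by rw [hCj1]; exact ENNReal.natCast_ne_top _)
  have hm10 : ((m - 10 : ℕ) : ℝ≥0∞) + 10 = mc := by
    rw [hmc, show (10 : ℝ≥0∞) = ((10 : ℕ) : ℝ≥0∞) by simp, ← Nat.cast_add]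
    congr 1
    omega
  have hm10le : ((m - 10 : ℕ) : ℝ≥0∞) ≤ mc ^ 2 := by
    calc ((m - 10 : ℕ) : ℝ≥0∞) ≤ mc := by
          rw [hmc]; exact_mod_cast Nat.sub_le m 10
      _ ≤ mc ^ 2 := le_self_pow₀ (by rw [hmc]; exact_mod_cast hm1) (by norm_num)
  have final : mc ^ 3 * (Cj * Cj1) ≤ (mc ^ 3 * meet + 13 * mc ^ 2) * (Cj * Cj1) := by
    calc mc ^ 3 * (Cj * Cj1)
        = (((m - 10 : ℕ) : ℝ≥0∞) + 10) * mc ^ 2 * (Cj * Cj1) := by rw [hm10]; ring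
      _ = ((m - 10 : ℕ) : ℝ≥0∞) * mc ^ 2 * (Cj * Cj1) + 10 * mc ^ 2 * (Cj * Cj1) := by ring
      _ ≤ (mc ^ 3 * (Cj * Cj1 * meet) + 3 * (((m - 10 : ℕ) : ℝ≥0∞) * (Cj * Cj1)))
            + 10 * mc ^ 2 * (Cj * Cj1) := add_le_add_left key3 _
      _ ≤ (mc ^ 3 * (Cj * Cj1 * meet) + 3 * (mc ^ 2 * (Cj * Cj1)))
            + 10 * mc ^ 2 * (Cj * Cj1) := by
          refine add_le_add_left (add_le_add_right ?_ _) _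
          exact mul_le_mul_right (mul_le_mul_left hm10le _) 3
      _ = (mc ^ 3 * meet + 13 * mc ^ 2) * (Cj * Cj1) := by ring
  exact (ENNReal.mul_le_mul_iff_left hCC0 hCCt).mp final

end MeetBound

section TVGlue

open scoped Classical
set_option linter.unusedSectionVars false

variable [Countable G] [MeasurableSpace G] [MeasurableSingletonClass G]

variable {K : G → Measure G}

lemma tvDist_eq (a b : ℕ) (v : G) :
    tvDist (nStep K a v) (nStep K b v)
      = ∑' y, ((pk K a v y - pk K b v y) + (pk K b v y - pk K a v y)) := rfl

lemma meetMass_eq (a b : ℕ) (v : G) :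
    meetMass (nStep K a v) (nStep K b v) = ∑' y, min (pk K a v y) (pk K b v y) := rfl

lemma tvDist_symm' (a b : ℕ) (v : G) :
    tvDist (nStep K a v) (nStep K b v) = tvDist (nStep K b v) (nStep K a v) := by
  rw [tvDist_eq, tvDist_eq]
  exact tsum_congr fun y => add_comm _ _

lemma tvDist_self (a : ℕ) (v : G) : tvDist (nStep K a v) (nStep K a v) = 0 := by
  rw [tvDist_eq]
  simp

lemma pointwise_tv_meet (p q : ℝ≥0∞) :
    ((p - q) + (q - p)) + 2 * min p q = p + q := by
  rcases le_total p q with h | h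
  · rw [min_eq_left h, tsub_eq_zero_of_le h, zero_add, two_mul, ← add_assoc,
      tsub_add_cancel_of_le h]
    exact add_comm _ _
  · rw [min_eq_right h, tsub_eq_zero_of_le h, add_zero, two_mul, ← add_assoc,
      tsub_add_cancel_of_le h]

lemma tv_meet_two (hK : ∀ x, IsProbabilityMeasure (K x)) (a b : ℕ) (v : G) :
    tvDist (nStep K a v) (nStep K b v) + 2 * meetMass (nStep K a v) (nStep K b v) = 2 := by
  rw [tvDist_eq, meetMass_eq, ← ENNReal.tsum_mul_left, ← ENNReal.tsum_add]
  calc ∑' y, (((pk K a v y - pk K b v y) + (pk K b v y - pk K a v y))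
        + 2 * min (pk K a v y) (pk K b v y))
      = ∑' y, (pk K a v y + pk K b v y) := tsum_congr fun y => pointwise_tv_meet _ _
    _ = 2 := by
        rw [ENNReal.tsum_add, pk_mass K hK a v, pk_mass K hK b v]
        norm_num

lemma meet_le_one (hK : ∀ x, IsProbabilityMeasure (K x)) (a b : ℕ) (v : G) :
    meetMass (nStep K a v) (nStep K b v) ≤ 1 := by
  rw [meetMass_eq]
  calc ∑' y, min (pk K a v y) (pk K b v y) ≤ ∑' y, pk K a v y :=
        ENNReal.tsum_le_tsum fun y => min_le_left _ _
    _ = 1 := pk_mass K hK a v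

lemma tvDist_triangle (a b c : ℕ) (v : G) :
    tvDist (nStep K a v) (nStep K c v)
      ≤ tvDist (nStep K a v) (nStep K b v) + tvDist (nStep K b v) (nStep K c v) := by
  rw [tvDist_eq, tvDist_eq, tvDist_eq, ← ENNReal.tsum_add]
  refine ENNReal.tsum_le_tsum fun y => ?_
  set p := pk K a v y
  set q := pk K b v y
  set r := pk K c v y
  calc (p - r) + (r - p) ≤ ((p - q) + (q - r)) + ((r - q) + (q - p)) :=
        add_le_add tsub_le_tsub_add_tsub tsub_le_tsub_add_tsub
    _ = ((p - q) + (q - p)) + ((q - r) + (r - q)) := by ring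

/-- total variation to the one-step-later distribution does not increase in time,
uniformly over starting points. -/
lemma tv_transfer (hK : ∀ x, IsProbabilityMeasure (K x)) (c N : ℕ) (v : G) (B : ℝ≥0∞)
    (hB : ∀ x, tvDist (nStep K N x) (nStep K (N + 1) x) ≤ B) :
    tvDist (nStep K (c + N) v) (nStep K (c + (N + 1)) v) ≤ B := by
  rw [tvDist_eq]
  have hsplit1 : ∀ y, pk K (c + N) v y = ∑' z, pk K c v z * pk K N z y :=
    fun y => pk_add K c N v y
  have hsplit2 : ∀ y, pk K (c + (N + 1)) v y = ∑' z, pk K c v z * pk K (N + 1) z y :=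
    fun y => pk_add K c (N + 1) v y
  have key : ∀ y, (pk K (c + N) v y - pk K (c + (N + 1)) v y)
      + (pk K (c + (N + 1)) v y - pk K (c + N) v y)
      ≤ ∑' z, pk K c v z * ((pk K N z y - pk K (N + 1) z y)
        + (pk K (N + 1) z y - pk K N z y)) := by
    intro y
    rw [hsplit1, hsplit2]
    have h1 : (∑' z, pk K c v z * pk K N z y) - (∑' z, pk K c v z * pk K (N + 1) z y)
        ≤ ∑' z, pk K c v z * (pk K N z y - pk K (N + 1) z y) := by
      rw [tsub_le_iff_right, ← ENNReal.tsum_add]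
      refine ENNReal.tsum_le_tsum fun z => ?_
      rw [← mul_add]
      exact mul_le_mul_right le_tsub_add _
    have h2 : (∑' z, pk K c v z * pk K (N + 1) z y) - (∑' z, pk K c v z * pk K N z y)
        ≤ ∑' z, pk K c v z * (pk K (N + 1) z y - pk K N z y) := by
      rw [tsub_le_iff_right, ← ENNReal.tsum_add]
      refine ENNReal.tsum_le_tsum fun z => ?_
      rw [← mul_add]
      exact mul_le_mul_right le_tsub_add _
    calc _ ≤ (∑' z, pk K c v z * (pk K N z y - pk K (N + 1) z y))
          + ∑' z, pk K c v z * (pk K (N + 1) z y - pk K N z y) := add_le_add h1 h2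
      _ = _ := by
          rw [← ENNReal.tsum_add]
          exact tsum_congr fun z => by rw [mul_add]
  calc ∑' y, ((pk K (c + N) v y - pk K (c + (N + 1)) v y)
        + (pk K (c + (N + 1)) v y - pk K (c + N) v y))
      ≤ ∑' y, ∑' z, pk K c v z * ((pk K N z y - pk K (N + 1) z y)
        + (pk K (N + 1) z y - pk K N z y)) := ENNReal.tsum_le_tsum key
    _ = ∑' z, pk K c v z * tvDist (nStep K N z) (nStep K (N + 1) z) := by
        rw [ENNReal.tsum_comm]
        exact tsum_congr fun z => by rw [ENNReal.tsum_mul_left, tvDist_eq]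
    _ ≤ ∑' z, pk K c v z * B := ENNReal.tsum_le_tsum fun z => mul_le_mul_right (hB z) _
    _ = B := by rw [ENNReal.tsum_mul_right, pk_mass K hK c v, one_mul]

lemma tv_chain (hK : ∀ x, IsProbabilityMeasure (K x)) (v : G) (B : ℝ≥0∞) (N₀ : ℕ)
    (hB : ∀ i, N₀ ≤ i → tvDist (nStep K i v) (nStep K (i + 1) v) ≤ B) :
    ∀ (k n : ℕ), N₀ ≤ n → tvDist (nStep K n v) (nStep K (n + k) v) ≤ k * B := by
  intro k
  induction k with
  | zero => intro n _; simp [tvDist_self]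
  | succ k ih =>
      intro n hn
      calc tvDist (nStep K n v) (nStep K (n + (k + 1)) v)
          ≤ tvDist (nStep K n v) (nStep K (n + k) v)
            + tvDist (nStep K (n + k) v) (nStep K (n + k + 1) v) := by
            rw [show n + (k + 1) = (n + k) + 1 from rfl]
            exact tvDist_triangle n (n + k) ((n + k) + 1) v
        _ ≤ k * B + B := add_le_add (ih n hn) (hB (n + k) (by omega))
        _ = (k + 1 : ℕ) * B := by push_cast; ring

end TVGlue

section Final

open scoped Classical
set_option linter.unusedSectionVars false

variable [Countable G] [MeasurableSpace G] [MeasurableSingletonClass G]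

variable {K : G → Measure G} {l M : ℕ}

/-- the consecutive total-variation bound at the special time, uniformly in the start. -/
lemma tv_consec (hK : ∀ x, IsProbabilityMeasure (K x))
    (hM : ∀ x, (M : ℝ≥0∞)⁻¹ < mm K l x) (hM1 : 1 ≤ M)
    (m : ℕ) (hm : 100 ≤ m) (x : G) :
    tvDist (nStep K (2 * (M * m ^ 4) * l + M * m ^ 4) x)
        (nStep K (2 * (M * m ^ 4) * l + M * m ^ 4 + 1) x)
      ≤ 26 * (m : ℝ≥0∞)⁻¹ := by
  set N := 2 * (M * m ^ 4) * l + M * m ^ 4 with hN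
  set mc := (m : ℝ≥0∞) with hmc
  have hmc0 : mc ≠ 0 := by rw [hmc]; exact Nat.cast_ne_zero.mpr (by omega)
  have hmct : mc ≠ ∞ := by rw [hmc]; exact ENNReal.natCast_ne_top m
  set meet := meetMass (nStep K N x) (nStep K (N + 1) x) with hmeet
  set tv := tvDist (nStep K N x) (nStep K (N + 1) x) with htv
  have hmb : mc ^ 3 ≤ mc ^ 3 * meet + 13 * mc ^ 2 := by
    have := meet_bound hK hM hM1 m hm x
    rw [hmc, hmeet, hN]
    exact this
  have htvm : tv + 2 * meet = 2 := by
    rw [htv, hmeet]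
    exact tv_meet_two hK N (N + 1) x
  have hmeet1 : meet ≤ 1 := by rw [hmeet]; exact meet_le_one hK N (N + 1) x
  have hfin : 2 * (mc ^ 3 * meet) ≠ ∞ := by
    refine ENNReal.mul_ne_top ENNReal.ofNat_ne_top (ENNReal.mul_ne_top ?_ ?_)
    · exact ENNReal.pow_ne_top hmct
    · exact (lt_of_le_of_lt hmeet1 ENNReal.one_lt_top).ne
  have step1 : mc ^ 3 * tv ≤ 26 * mc ^ 2 := by
    have h1 : mc ^ 3 * tv + 2 * (mc ^ 3 * meet) ≤ 26 * mc ^ 2 + 2 * (mc ^ 3 * meet) := by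
      calc mc ^ 3 * tv + 2 * (mc ^ 3 * meet) = mc ^ 3 * (tv + 2 * meet) := by ring
        _ = mc ^ 3 * 2 := by rw [htvm]
        _ ≤ (mc ^ 3 * meet + 13 * mc ^ 2) * 2 := mul_le_mul_left hmb 2
        _ = 26 * mc ^ 2 + 2 * (mc ^ 3 * meet) := by ring
    exact (ENNReal.add_le_add_iff_right hfin).mp h1
  have step2 : tv * mc ≤ 26 := by
    have h2 : (tv * mc) * mc ^ 2 ≤ 26 * mc ^ 2 := by
      calc (tv * mc) * mc ^ 2 = mc ^ 3 * tv := by ring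
        _ ≤ 26 * mc ^ 2 := step1
    exact (ENNReal.mul_le_mul_iff_left (pow_ne_zero 2 hmc0) (ENNReal.pow_ne_top hmct)).mp h2
  calc tv = (tv * mc) * mc⁻¹ := by
        rw [mul_assoc, ENNReal.mul_inv_cancel hmc0 hmct, mul_one]
    _ ≤ 26 * mc⁻¹ := mul_le_mul_left step2 _

theorem tv_convergence_aux (hK : ∀ x, IsProbabilityMeasure (K x))
    (hM : ∀ x, (M : ℝ≥0∞)⁻¹ < mm K l x) (hM1 : 1 ≤ M) (v : G) (k : ℕ) :
    Filter.Tendsto (fun n : ℕ => tvDist (nStep K (n + k) v) (nStep K n v))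
      Filter.atTop (nhds 0) := by
  rw [ENNReal.tendsto_nhds_zero]
  intro η hη
  -- choose m
  have decay : Filter.Tendsto (fun m : ℕ => ((k : ℝ≥0∞) * 26) * (m : ℝ≥0∞)⁻¹)
      Filter.atTop (nhds 0) := by
    have := ENNReal.Tendsto.const_mul (a := (k : ℝ≥0∞) * 26)
      ENNReal.tendsto_inv_nat_nhds_zero
      (Or.inr (ENNReal.mul_ne_top (ENNReal.natCast_ne_top k) (by norm_num)))
    simpa using this
  obtain ⟨m, hmb, hm100⟩ :=
    ((ENNReal.tendsto_nhds_zero.mp decay η hη).and (Filter.eventually_ge_atTop 100)).exists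
  set N₀ := 2 * (M * m ^ 4) * l + M * m ^ 4 with hN₀
  have hB : ∀ i, N₀ ≤ i → tvDist (nStep K i v) (nStep K (i + 1) v) ≤ 26 * (m : ℝ≥0∞)⁻¹ := by
    intro i hi
    obtain ⟨c, rfl⟩ : ∃ c, i = c + N₀ := ⟨i - N₀, by omega⟩
    have := tv_transfer hK c N₀ v (26 * (m : ℝ≥0∞)⁻¹) (fun x => tv_consec hK hM hM1 m hm100 x)
    exact this
  refine Filter.eventually_atTop.mpr ⟨N₀, fun n hn => ?_⟩
  calc tvDist (nStep K (n + k) v) (nStep K n v)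
      = tvDist (nStep K n v) (nStep K (n + k) v) := tvDist_symm' (n + k) n v
    _ ≤ k * (26 * (m : ℝ≥0∞)⁻¹) := tv_chain hK v _ N₀ hB k n hn
    _ = ((k : ℝ≥0∞) * 26) * (m : ℝ≥0∞)⁻¹ := by ring
    _ ≤ η := hmb

end Final

/-- Under condition (*), the total variation distance between `K^{n+k}(v,·)`
and `K^n(v,·)` tends to `0` for every `v` and `k`. -/
theorem tv_convergence_of_condition_star
    [Countable G] [MeasurableSpace G] [MeasurableSingletonClass G]
    (K : G → Measure G) (hK : ∀ x, IsProbabilityMeasure (K x))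
    (hstar : ∃ (l : ℕ) (ε : ℝ≥0∞), 0 < ε ∧
      ∀ x : G, ε < meetMass (nStep K l x) (nStep K (l + 1) x)) :
    ∀ (v : G) (k : ℕ),
      Filter.Tendsto (fun n : ℕ => tvDist (nStep K (n + k) v) (nStep K n v))
        Filter.atTop (nhds 0) := by
  obtain ⟨l, ε, hε, hstar'⟩ := hstar
  obtain ⟨M₀, hM₀⟩ := ENNReal.exists_inv_nat_lt hε.ne'
  have hM : ∀ x, ((M₀ + 1 : ℕ) : ℝ≥0∞)⁻¹ < mm K l x := by
    intro x
    refine lt_of_le_of_lt ?_ (lt_trans hM₀ (hstar' x))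
    exact ENNReal.inv_le_inv' (by exact_mod_cast Nat.le_succ M₀)
  intro v k
  exact tv_convergence_aux hK hM (Nat.le_add_left 1 M₀) v k

end CMTPaper
end

section
/- Let K be a Markov kernel on a countable set G satisfying condition (*): there exist l ∈ ℕ and ε > 0 such that ‖K^l(x,·) ∧ K^{l+1}(x,·)‖ > ε for every x ∈ G. Then for every tail path property A ⊆ G^ℕ there exists an invariant path property A' ⊆ G^ℕ such that ℙ_x(A Δ A') = 0 simultaneously for every x ∈ G; consequently the Markov chain with kernel K and any initial distribution is steady. In particular, if K additionally has the Liouville property, then for every tail path property A and every x ∈ G one has ℙ_x(A) ∈ {0,1}. -/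
set_option linter.unusedSectionVars false
set_option linter.unusedVariables false
set_option maxHeartbeats 1000000


open MeasureTheory ENNReal

namespace CMTPaper

variable {G : Type*}

section Helpers

variable [Countable G] [MeasurableSpace G] [MeasurableSingletonClass G]

lemma measSet (s : Set G) : MeasurableSet s := s.to_countable.measurableSet

lemma measG {β : Type*} [MeasurableSpace β] (f : G → β) : Measurable f :=
  measurable_of_countable f

def drop (n : ℕ) : (ℕ → G) → (ℕ → G) := fun ω i => ω (n + i)
lemma drop_zero : (drop 0 : (ℕ→G)→(ℕ→G)) = id := by funext ω i; simp [drop]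
lemma drop_shift (n : ℕ) : (drop n ∘ shift : (ℕ→G)→(ℕ→G)) = drop (n + 1) := by
  funext ω i; simp [drop, shift]; ring_nf
lemma drop_comp (m n : ℕ) : (drop m ∘ drop n : (ℕ→G)→(ℕ→G)) = drop (n + m) := by
  funext ω i; simp [drop]; ring_nf

lemma shift_drop (n : ℕ) : (shift ∘ drop n : (ℕ→G)→(ℕ→G)) = drop (n + 1) := by
  funext ω i; simp [drop, shift]; ring_nf

lemma drop_surj (n : ℕ) : Function.Surjective (drop n : (ℕ→G)→(ℕ→G)) := by
  intro ω
  exact ⟨fun j => ω (j - n), by funext i; simp [drop]⟩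

lemma drop_one : (drop 1 : (ℕ→G)→(ℕ→G)) = shift := by
  funext ω i; simp [drop, shift, Nat.add_comm]

lemma measurable_drop (n : ℕ) : Measurable (drop n : (ℕ→G)→(ℕ→G)) :=
  measurable_pi_lambda _ fun i => measurable_pi_apply (n + i)
lemma measurable_shift : Measurable (shift : (ℕ→G)→(ℕ→G)) :=
  measurable_pi_lambda _ fun i => measurable_pi_apply (i + 1)

def Cyl (u : ℕ → G) (n : ℕ) : Set (ℕ → G) := {ω | ∀ i ≤ n, ω i = u i}

lemma measurableSet_Cyl (u : ℕ → G) (n : ℕ) : MeasurableSet (Cyl u n) := by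
  have : Cyl u n = ⋂ i ∈ Finset.range (n+1), (fun ω : ℕ → G => ω i) ⁻¹' {u i} := by
    ext ω; simp [Cyl, Nat.lt_succ_iff]
  rw [this]
  exact MeasurableSet.biInter (Set.to_countable _)
    (fun i _ => measurable_pi_apply i (measSet {u i}))

lemma tsum_singletons (μ : Measure G) : ∑' y : G, μ {y} = μ Set.univ := by
  rw [← measure_iUnion (fun a b hab => by simp [Function.onFun, Set.disjoint_singleton, hab])
    (fun y => measSet {y})]
  rw [Set.iUnion_of_singleton]

lemma nStep_apply_succ (K : G → Measure G) (n : ℕ) (x : G) (s : Set G) :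
    nStep K (n+1) x s = ∑' y : G, K x {y} * nStep K n y s := by
  show Measure.sum _ s = _
  rw [Measure.sum_apply _ (measSet s)]
  simp [Measure.smul_apply, smul_eq_mul]

lemma nStep_prob (K : G → Measure G) (hK : ∀ x, IsProbabilityMeasure (K x)) (n : ℕ) (x : G) :
    IsProbabilityMeasure (nStep K n x) := by
  induction n generalizing x with
  | zero => exact Measure.dirac.isProbabilityMeasure
  | succ n ih =>
    constructor
    rw [nStep_apply_succ]
    have : ∀ y : G, K x {y} * nStep K n y Set.univ = K x {y} := by
      intro y; rw [(ih y).measure_univ, mul_one]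
    rw [tsum_congr this, tsum_singletons, (hK x).measure_univ]

section PathLaw

variable {K : G → Measure G} {P : G → Measure (ℕ → G)} [∀ x, IsProbabilityMeasure (P x)]
  (hP : ∀ x, IsPathLaw K x (P x))

lemma zeroset_eq (x : G) : {ω : ℕ → G | ω 0 = x} = Cyl (fun _ => x) 0 := by
  ext ω; constructor
  · intro h i hi; rw [Nat.le_zero.mp hi]; exact h
  · intro h; exact h 0 le_rfl

lemma measurableSet_coord (n : ℕ) (s : Set G) :
    MeasurableSet {ω : ℕ → G | ω n ∈ s} := measurable_pi_apply n (measSet s)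

lemma measurableSet_coord_eq (n : ℕ) (x : G) :
    MeasurableSet {ω : ℕ → G | ω n = x} := measurableSet_coord n {x}

include hP

lemma P_zeroset (x : G) : P x {ω : ℕ → G | ω 0 = x} = 1 := by
  rw [zeroset_eq]
  have := hP x 0 (fun _ => x) rfl
  simpa [Cyl] using this

lemma P_zeroset_compl (x : G) : P x {ω : ℕ → G | ω 0 = x}ᶜ = 0 := by
  rw [measure_compl (measurableSet_coord_eq 0 x) (measure_ne_top _ _), P_zeroset hP,
    measure_univ, tsub_self]

lemma P_cyl_ne (x : G) {u : ℕ → G} (n : ℕ) (h : u 0 ≠ x) : P x (Cyl u n) = 0 := by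
  have hsub : Cyl u n ⊆ {ω : ℕ → G | ω 0 = x}ᶜ := by
    intro ω hω hc
    exact h ((hω 0 (Nat.zero_le n)).symm.trans hc)
  exact le_antisymm ((measure_mono hsub).trans (P_zeroset_compl hP x).le) (zero_le)

open Classical in
lemma P_cyl (x : G) (u : ℕ → G) (n : ℕ) :
    P x (Cyl u n) = if u 0 = x then ∏ i ∈ Finset.range n, K (u i) {u (i + 1)} else 0 := by
  split_ifs with h
  · exact hP x n u h
  · exact P_cyl_ne hP x n h

end PathLaw


section GenFrom
open MeasurableSpace

variable [Countable G] [MeasurableSpace G] [MeasurableSingletonClass G]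

/-- all cylinders -/
def cylsAll (G : Type*) : Set (Set (ℕ → G)) := {S | ∃ n u, S = Cyl u n}

/-- cylinders of length n -/
def cyls (G : Type*) (n : ℕ) : Set (Set (ℕ → G)) := {S | ∃ u, S = Cyl u n}

lemma cyl_eq_of_agree {u v : ℕ → G} {n m : ℕ} (hnm : n ≤ m)
    (h : ∀ i ≤ n, u i = v i) : Cyl v m ⊆ Cyl u n :=
  fun ω hω i hi => (hω i (hi.trans hnm)).trans (h i hi).symm

lemma isPiSystem_cylsAll : IsPiSystem (cylsAll G) := by
  rintro S ⟨n, u, rfl⟩ T ⟨m, v, rfl⟩ hne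
  obtain ⟨ω, hωu, hωv⟩ := hne
  rcases le_total n m with h | h
  · have : Cyl u n ∩ Cyl v m = Cyl v m := by
      apply Set.inter_eq_self_of_subset_right
      exact cyl_eq_of_agree h (fun i hi => ((hωu i hi).symm.trans (hωv i (hi.trans h))))
    rw [this]; exact ⟨m, v, rfl⟩
  · have : Cyl u n ∩ Cyl v m = Cyl u n := by
      apply Set.inter_eq_self_of_subset_left
      exact cyl_eq_of_agree h (fun i hi => ((hωv i hi).symm.trans (hωu i (hi.trans h))))
    rw [this]; exact ⟨n, u, rfl⟩

lemma isPiSystem_cyls (n : ℕ) : IsPiSystem (cyls G n) := by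
  rintro S ⟨u, rfl⟩ T ⟨v, rfl⟩ hne
  obtain ⟨ω, hωu, hωv⟩ := hne
  have : Cyl u n ∩ Cyl v n = Cyl u n := by
    apply Set.inter_eq_self_of_subset_left
    exact cyl_eq_of_agree le_rfl (fun i hi => ((hωv i hi).symm.trans (hωu i hi)))
  rw [this]; exact ⟨u, rfl⟩

/-- extension of a finite word by a constant -/
def extw (n : ℕ) (v : Fin n → G) (g : G) : ℕ → G := fun j => if h : j < n then v ⟨j, h⟩ else g

lemma coord_eq_iUnion (n : ℕ) (g : G) :
    {ω : ℕ → G | ω n = g} = ⋃ v : Fin n → G, Cyl (extw n v g) n := by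
  ext ω; constructor
  · intro hω
    refine Set.mem_iUnion.mpr ⟨fun j => ω j, fun i hi => ?_⟩
    by_cases h : i < n
    · simp [extw, h]
    · have : i = n := le_antisymm hi (not_lt.mp h)
      subst this; simpa [extw, h] using hω
  · rintro hω
    obtain ⟨v, hv⟩ := Set.mem_iUnion.mp hω
    have := hv n le_rfl
    simpa [extw] using this

/-- the filtration σ-algebras -/
def Falg (G : Type*) [MeasurableSpace G] (n : ℕ) : MeasurableSpace (ℕ → G) :=
  generateFrom (cyls G n)

lemma measurableSet_coord_F (n : ℕ) (s : Set G) :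
    MeasurableSet[Falg G n] {ω : ℕ → G | ω n ∈ s} := by
  have : {ω : ℕ → G | ω n ∈ s} = ⋃ g : s, {ω : ℕ → G | ω n = (g : G)} := by
    ext ω; simp
  rw [this]
  refine MeasurableSet.iUnion fun g => ?_
  rw [coord_eq_iUnion]
  exact MeasurableSet.iUnion fun v => MeasurableSpace.measurableSet_generateFrom ⟨_, rfl⟩

lemma measurable_coord_F (n : ℕ) : Measurable[Falg G n] (fun ω : ℕ → G => ω n) :=
  @measurable_to_countable' G (ℕ → G) _ _ (Falg G n) _
    (fun g => measurableSet_coord_F n {g})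

lemma Falg_le_pi (n : ℕ) : Falg G n ≤ MeasurableSpace.pi := by
  apply generateFrom_le
  rintro S ⟨u, rfl⟩
  exact measurableSet_Cyl u n

lemma Falg_mono : Monotone (Falg G) := by
  apply monotone_nat_of_le_succ
  intro n
  apply generateFrom_le
  rintro S ⟨u, rfl⟩
  classical
  have : Cyl u n = ⋃ z : G, Cyl (fun j => if j ≤ n then u j else z) (n + 1) := by
    ext ω; constructor
    · intro hω
      refine Set.mem_iUnion.mpr ⟨ω (n+1), fun i hi => ?_⟩
      by_cases h : i ≤ n
      · simp [h, hω i h]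
      · have : i = n + 1 := by omega
        subst this; simp [h]
    · rintro hω
      obtain ⟨z, hz⟩ := Set.mem_iUnion.mp hω
      intro i hi
      have := hz i (hi.trans (Nat.le_succ n))
      simpa [hi] using this
  rw [this]
  exact MeasurableSet.iUnion fun z => MeasurableSpace.measurableSet_generateFrom ⟨_, rfl⟩

lemma iSup_Falg : (⨆ n, Falg G n) = (MeasurableSpace.pi : MeasurableSpace (ℕ → G)) := by
  apply le_antisymm
  · exact iSup_le fun n => Falg_le_pi n
  · show MeasurableSpace.pi ≤ _
    refine iSup_le fun i => ?_
    have : Measurable[⨆ n, Falg G n] (fun ω : ℕ → G => ω i) :=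
      (measurable_coord_F i).mono (le_iSup (Falg G) i) le_rfl
    exact measurable_iff_comap_le.mp this

lemma pi_eq_generateFrom_cylsAll :
    (MeasurableSpace.pi : MeasurableSpace (ℕ → G)) = generateFrom (cylsAll G) := by
  apply le_antisymm
  · rw [← iSup_Falg]
    apply iSup_le
    intro n
    apply generateFrom_le
    rintro S ⟨u, rfl⟩
    exact MeasurableSpace.measurableSet_generateFrom ⟨n, u, rfl⟩
  · apply generateFrom_le
    rintro S ⟨n, u, rfl⟩
    exact measurableSet_Cyl u n

lemma Falg_eq_generateFrom (n : ℕ) : Falg G n = generateFrom (cyls G n) := rfl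

end GenFrom
section Seg

variable [Countable G] [MeasurableSpace G] [MeasurableSingletonClass G]
variable {K : G → Measure G} {P : G → Measure (ℕ → G)} [∀ x, IsProbabilityMeasure (P x)]
  (hP : ∀ x, IsPathLaw K x (P x))

/-- concatenation of words -/
def wcat (u : ℕ → G) (n : ℕ) (v : ℕ → G) : ℕ → G := fun i => if i < n then u i else v (i - n)

include hP

open Classical in
lemma seg (x : G) (u : ℕ → G) (n : ℕ) {B : Set (ℕ → G)} (hB : MeasurableSet B) :
    P x (Cyl u n ∩ drop n ⁻¹' B) = P x (Cyl u n) * P (u n) B := by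
  haveI : IsFiniteMeasure (P x (Cyl u n) • P (u n)) := by
    constructor
    rw [Measure.smul_apply, smul_eq_mul, measure_univ, mul_one]
    exact (measure_lt_top _ _)
  have key : ((P x).restrict (Cyl u n)).map (drop n) = P x (Cyl u n) • P (u n) := by
    refine ext_of_generate_finite (cylsAll G) pi_eq_generateFrom_cylsAll isPiSystem_cylsAll
      ?_ ?_
    · rintro S ⟨m, v, rfl⟩
      rw [Measure.map_apply (measurable_drop n) (measurableSet_Cyl v m),
        Measure.restrict_apply ((measurableSet_Cyl v m).preimage (measurable_drop n)),
        Measure.smul_apply, smul_eq_mul]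
      by_cases hv : v 0 = u n
      · set w := wcat u n v with hw
        have hset : drop n ⁻¹' Cyl v m ∩ Cyl u n = Cyl w (n + m) := by
          ext ω
          constructor
          · rintro ⟨h1, h2⟩ i hi
            by_cases h : i < n
            · rw [h2 i h.le]; simp [hw, wcat, h]
            · have h' := h1 (i - n) (by omega)
              simp only [drop] at h'
              rw [show n + (i - n) = i by omega] at h'
              rw [h']; simp [hw, wcat, h]
          · intro h
            constructor
            · intro j hj
              have := h (n + j) (by omega)
              have hnj : ¬ (n + j < n) := by omega
              simpa [drop, hw, wcat, hnj] using this
            · intro i hi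
              have := h i (by omega)
              by_cases hlt : i < n
              · simpa [hw, wcat, hlt] using this
              · have hin : i = n := by omega
                subst hin
                simpa [hw, wcat, hv] using this
        have hw0 : w 0 = u 0 := by
          by_cases h0 : 0 < n
          · simp [hw, wcat, h0]
          · have hn : n = 0 := by omega
            subst hn
            simpa [hw, wcat] using hv
        rw [hset, P_cyl hP, P_cyl hP, P_cyl hP, hw0]
        by_cases hux : u 0 = x
        · rw [if_pos hux, if_pos hux, if_pos hv, Finset.prod_range_add]
          congr 1
          · apply Finset.prod_congr rfl
            intro i hi
            have hilt : i < n := Finset.mem_range.mp hi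
            have e1 : w i = u i := by simp [hw, wcat, hilt]
            have e2 : w (i + 1) = u (i + 1) := by
              by_cases h : i + 1 < n
              · simp [hw, wcat, h]
              · have : i + 1 = n := by omega
                subst this
                simp [hw, wcat, hv]
            rw [e2, e1]
          · apply Finset.prod_congr rfl
            intro j _
            have e1 : w (n + j) = v j := by simp [hw, wcat]
            have e2 : w (n + j + 1) = v (j + 1) := by
              have h : ¬ (n + j + 1 < n) := by omega
              have h2 : n + j + 1 - n = j + 1 := by omega
              simp [hw, wcat, h, h2]
            rw [e2, e1]
        · rw [if_neg hux, if_neg hux, zero_mul]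
      · have hset : drop n ⁻¹' Cyl v m ∩ Cyl u n = ∅ := by
          ext ω
          simp only [Set.mem_inter_iff, Set.mem_empty_iff_false, iff_false]
          rintro ⟨h1, h2⟩
          apply hv
          have hv0 : ω n = v 0 := h1 0 (Nat.zero_le m)
          rw [← hv0, h2 n le_rfl]
        rw [hset, measure_empty, P_cyl_ne hP _ m hv, mul_zero]
    · rw [Measure.map_apply (measurable_drop n) MeasurableSet.univ]
      simp only [Set.preimage_univ, Measure.restrict_apply_univ, Measure.smul_apply,
        smul_eq_mul, measure_univ, mul_one]
  have happ := congrArg (fun μ : Measure (ℕ → G) => μ B) key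
  simp only [Measure.map_apply (measurable_drop n) hB,
    Measure.restrict_apply (hB.preimage (measurable_drop n)), Measure.smul_apply,
    smul_eq_mul] at happ
  rw [Set.inter_comm] at happ
  exact happ

end Seg
section Markov

variable [Countable G] [MeasurableSpace G] [MeasurableSingletonClass G]
variable {K : G → Measure G} {P : G → Measure (ℕ → G)} [∀ x, IsProbabilityMeasure (P x)]
  (hP : ∀ x, IsPathLaw K x (P x))

open Classical in
def pairw (x y : G) : ℕ → G := fun i => if i = 0 then x else y

include hP

lemma onestep (x : G) {C : Set (ℕ → G)} (hC : MeasurableSet C) :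
    P x (shift ⁻¹' C) = ∑' y : G, K x {y} * P y C := by
  classical
  have h1 : P x (shift ⁻¹' C) = P x (shift ⁻¹' C ∩ {ω : ℕ → G | ω 0 = x}) :=
    (measure_inter_conull (P_zeroset_compl hP x)).symm
  have hU : {ω : ℕ → G | ω 0 = x} = ⋃ y : G, Cyl (pairw x y) 1 := by
    ext ω
    constructor
    · intro hω
      refine Set.mem_iUnion.mpr ⟨ω 1, fun i hi => ?_⟩
      interval_cases i
      · simpa [pairw] using hω
      · simp [pairw]
    · rintro hω
      obtain ⟨y, hy⟩ := Set.mem_iUnion.mp hω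
      have := hy 0 (by omega)
      simpa [pairw] using this
  rw [h1, hU, Set.inter_iUnion]
  rw [measure_iUnion ?hd ?hm]
  case hd =>
    intro a b hab
    simp only [Function.onFun]
    apply Set.disjoint_left.mpr
    rintro ω ⟨-, h1ω⟩ ⟨-, h2ω⟩
    have e1 := h1ω 1 le_rfl
    have e2 := h2ω 1 le_rfl
    simp only [pairw, if_neg one_ne_zero] at e1 e2
    exact hab (e1.symm.trans e2)
  case hm =>
    intro y
    exact (hC.preimage measurable_shift).inter (measurableSet_Cyl _ 1)
  apply tsum_congr
  intro y
  rw [Set.inter_comm, ← drop_one, seg hP x (pairw x y) 1 hC]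
  have e1 : pairw x y 1 = y := by simp [pairw]
  have e2 : P x (Cyl (pairw x y) 1) = K x {y} := by
    rw [P_cyl hP]
    simp [pairw]
  rw [e1, e2]

lemma markov (n : ℕ) (x : G) {B : Set (ℕ → G)} (hB : MeasurableSet B) :
    P x (drop n ⁻¹' B) = ∑' z : G, nStep K n x {z} * P z B := by
  classical
  induction n generalizing x with
  | zero =>
    rw [drop_zero]
    rw [tsum_eq_single x ?h]
    case h =>
      intro z hzx
      have : (nStep K 0 x) {z} = 0 := by
        show Measure.dirac x {z} = 0
        rw [Measure.dirac_apply' x (measSet {z})]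
        simp [Set.indicator_of_notMem, Ne.symm hzx]
      rw [this, zero_mul]
    have : (nStep K 0 x) {x} = 1 := by
      show Measure.dirac x {x} = 1
      rw [Measure.dirac_apply' x (measSet {x})]
      simp
    rw [this, one_mul]
    rfl
  | succ n ih =>
    have hd : (drop (n+1) : (ℕ→G)→(ℕ→G)) = drop n ∘ shift := (drop_shift n).symm
    rw [hd, Set.preimage_comp, onestep hP x (hB.preimage (measurable_drop n))]
    have : ∀ y : G, K x {y} * P y (drop n ⁻¹' B)
        = ∑' z : G, K x {y} * (nStep K n y {z} * P z B) := by
      intro y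
      rw [ih y, ENNReal.tsum_mul_left]
    rw [tsum_congr this, ENNReal.tsum_comm]
    apply tsum_congr
    intro z
    rw [nStep_apply_succ, ← ENNReal.tsum_mul_right]
    apply tsum_congr
    intro y
    ring

end Markov
section Condexp

variable [Countable G] [MeasurableSpace G] [MeasurableSingletonClass G]
variable {K : G → Measure G} {P : G → Measure (ℕ → G)} [∀ x, IsProbabilityMeasure (P x)]
  (hP : ∀ x, IsPathLaw K x (P x))

include hP

open Classical in
lemma P_zeroset' (w z : G) : P w {ω : ℕ → G | ω 0 = z} = if z = w then 1 else 0 := by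
  split_ifs with h
  · subst h; exact P_zeroset hP z
  · have hsub : {ω : ℕ → G | ω 0 = z} ⊆ {ω : ℕ → G | ω 0 = w}ᶜ := by
      intro ω hω hc
      exact h (hω.symm.trans hc)
    exact le_antisymm ((measure_mono hsub).trans (P_zeroset_compl hP w).le) (zero_le)

lemma coordLaw (n : ℕ) (x z : G) : P x {ω : ℕ → G | ω n = z} = nStep K n x {z} := by
  classical
  have hset : {ω : ℕ → G | ω n = z} = drop n ⁻¹' {α : ℕ → G | α 0 = z} := by
    ext ω; simp [drop]
  rw [hset, markov hP n x (measurableSet_coord_eq 0 z)]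
  rw [tsum_eq_single z (fun w hwz => by rw [P_zeroset' hP w z, if_neg (Ne.symm hwz), mul_zero])]
  rw [P_zeroset' hP z z, if_pos rfl, mul_one]

lemma lint_coord (n : ℕ) (x : G) (F : G → ℝ≥0∞) :
    ∫⁻ ω, F (ω n) ∂(P x) = ∑' z : G, F z * nStep K n x {z} := by
  have hmap : ∫⁻ ω, F (ω n) ∂(P x) = ∫⁻ z, F z ∂((P x).map (fun ω : ℕ → G => ω n)) :=
    (lintegral_map (measG F) (measurable_pi_apply n)).symm
  rw [hmap, lintegral_countable']
  apply tsum_congr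
  intro z
  rw [Measure.map_apply (measurable_pi_apply n) (measSet {z})]
  have : (fun ω : ℕ → G => ω n) ⁻¹' {z} = {ω : ℕ → G | ω n = z} := rfl
  rw [this, coordLaw hP]

/-- the core conditional-expectation identity, measure form -/
lemma core_meas (n : ℕ) (x : G) {B : Set (ℕ → G)} (hB : MeasurableSet B)
    {s : Set (ℕ → G)} (hs : MeasurableSet[Falg G n] s) :
    P x (drop n ⁻¹' B ∩ s) = ∫⁻ ω in s, P (ω n) B ∂(P x) := by
  have hle : Falg G n ≤ (inferInstance : MeasurableSpace (ℕ → G)) := Falg_le_pi n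
  set μ₁ : Measure (ℕ → G) := (P x).restrict (drop n ⁻¹' B) with hμ₁
  set μ₂ : Measure (ℕ → G) := (P x).withDensity (fun ω => P (ω n) B) with hμ₂
  have hdens : Measurable (fun ω : ℕ → G => P (ω n) B) :=
    (measG (fun z => P z B)).comp (measurable_pi_apply n)
  have htrim : μ₁.trim hle = μ₂.trim hle := by
    haveI h₁ : IsFiniteMeasure μ₁ := by
      constructor
      rw [hμ₁, Measure.restrict_apply_univ]
      exact measure_lt_top _ _
    haveI h₂ : IsFiniteMeasure μ₂ := by
      constructor
      rw [hμ₂, withDensity_apply _ MeasurableSet.univ, Measure.restrict_univ]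
      calc ∫⁻ ω, P (ω n) B ∂(P x) ≤ ∫⁻ _, 1 ∂(P x) :=
            lintegral_mono fun ω => prob_le_one
        _ = 1 := by simp
        _ < ⊤ := one_lt_top
    refine ext_of_generate_finite (cyls G n) rfl (isPiSystem_cyls n) ?_ ?_
    · rintro S ⟨u, rfl⟩
      rw [trim_measurableSet_eq hle (MeasurableSpace.measurableSet_generateFrom ⟨u, rfl⟩),
        trim_measurableSet_eq hle (MeasurableSpace.measurableSet_generateFrom ⟨u, rfl⟩)]
      rw [hμ₁, Measure.restrict_apply (measurableSet_Cyl u n), hμ₂,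
        withDensity_apply _ (measurableSet_Cyl u n)]
      rw [seg hP x u n hB]
      have : ∫⁻ ω in Cyl u n, P (ω n) B ∂(P x)
          = ∫⁻ _ in Cyl u n, P (u n) B ∂(P x) := by
        apply setLIntegral_congr_fun (measurableSet_Cyl u n)
        exact fun ω hω => by rw [hω n le_rfl]
      rw [this, setLIntegral_const, mul_comm]
    · rw [trim_measurableSet_eq hle MeasurableSet.univ,
        trim_measurableSet_eq hle MeasurableSet.univ]
      rw [hμ₁, Measure.restrict_apply_univ, hμ₂, withDensity_apply _ MeasurableSet.univ,
        Measure.restrict_univ]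
      rw [markov hP n x hB, lint_coord hP n x (fun z => P z B)]
      exact tsum_congr fun z => mul_comm _ _
  have happ := congrArg (fun μ : @Measure (ℕ → G) (Falg G n) => μ s) htrim
  simp only [trim_measurableSet_eq hle hs] at happ
  rw [hμ₁, Measure.restrict_apply (hle s hs)] at happ
  rw [hμ₂, withDensity_apply _ (hle s hs)] at happ
  rw [Set.inter_comm] at happ
  exact happ

/-- conditional expectation identification -/
lemma condexp_eq (n : ℕ) (x : G) {B : Set (ℕ → G)} (hB : MeasurableSet B) :
    (fun ω : ℕ → G => (P (ω n) B).toReal)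
      =ᵐ[P x] (P x)[(drop n ⁻¹' B).indicator (fun _ => (1:ℝ)) | Falg G n] := by
  have hle : Falg G n ≤ (inferInstance : MeasurableSpace (ℕ → G)) := Falg_le_pi n
  have hA : MeasurableSet (drop n ⁻¹' B) := hB.preimage (measurable_drop n)
  have hgm : Measurable (fun ω : ℕ → G => (P (ω n) B).toReal) :=
    (measG (fun z => (P z B).toReal)).comp (measurable_pi_apply n)
  have hgint : Integrable (fun ω : ℕ → G => (P (ω n) B).toReal) (P x) := by
    refine (integrable_const (1:ℝ)).mono' hgm.aestronglyMeasurable (ae_of_all _ fun ω => ?_)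
    rw [Real.norm_eq_abs, abs_of_nonneg ENNReal.toReal_nonneg]
    exact ENNReal.toReal_le_of_le_ofReal one_pos.le (by simpa using prob_le_one)
  refine ae_eq_condExp_of_forall_setIntegral_eq hle
    ((integrable_const (1:ℝ)).indicator hA) (fun s _ _ => hgint.integrableOn)
    (fun s hs hμs => ?_) ?_
  · have hlhs : ∫ ω in s, (P (ω n) B).toReal ∂(P x)
        = (∫⁻ ω in s, P (ω n) B ∂(P x)).toReal := by
      apply integral_toReal
      · exact ((measG (fun z => P z B)).comp (measurable_pi_apply n)).aemeasurable
      · exact ae_of_all _ (fun ω => measure_lt_top _ _)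
    have hrhs : ∫ ω in s, (drop n ⁻¹' B).indicator (fun _ => (1:ℝ)) ω ∂(P x)
        = (P x (drop n ⁻¹' B ∩ s)).toReal := by
      rw [integral_indicator hA, setIntegral_const, measureReal_def, Measure.restrict_apply hA, smul_eq_mul,
        mul_one]
    rw [hlhs, hrhs, core_meas hP n x hB hs]
  · have hgmF : Measurable[Falg G n] (fun ω : ℕ → G => (P (ω n) B).toReal) :=
      (measG (fun z => (P z B).toReal)).comp (measurable_coord_F n)
    exact StronglyMeasurable.aestronglyMeasurable hgmF.stronglyMeasurable

end Condexp
section Levy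
open Filter Topology

variable [Countable G] [MeasurableSpace G] [MeasurableSingletonClass G]
variable {K : G → Measure G} {P : G → Measure (ℕ → G)} [∀ x, IsProbabilityMeasure (P x)]
  (hP : ∀ x, IsPathLaw K x (P x))

/-- the natural filtration -/
def FltG (G : Type*) [Countable G] [MeasurableSpace G] [MeasurableSingletonClass G] :
    Filtration ℕ (inferInstance : MeasurableSpace (ℕ → G)) :=
  ⟨Falg G, Falg_mono, Falg_le_pi⟩

lemma iSup_FltG : (⨆ n, (FltG G) n) = (inferInstance : MeasurableSpace (ℕ → G)) :=
  iSup_Falg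

include hP

lemma levy (x : G) {A : Set (ℕ → G)} (hA : MeasurableSet A) (Bs : ℕ → Set (ℕ → G))
    (hBs : ∀ n, MeasurableSet (Bs n)) (hrep : ∀ n, drop n ⁻¹' (Bs n) = A) :
    ∀ᵐ ω ∂(P x), Tendsto (fun n => (P (ω n) (Bs n)).toReal) atTop
      (𝓝 (A.indicator (fun _ => (1:ℝ)) ω)) := by
  set g : (ℕ → G) → ℝ := A.indicator (fun _ => (1:ℝ)) with hg
  have hgint : Integrable g (P x) := (integrable_const (1:ℝ)).indicator hA
  have hgmeas : StronglyMeasurable[⨆ n, (FltG G) n] g := by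
    rw [iSup_FltG]
    exact stronglyMeasurable_const.indicator hA
  have hlevy := hgint.tendsto_ae_condExp hgmeas
  have hcond : ∀ n : ℕ, (fun ω : ℕ → G => (P (ω n) (Bs n)).toReal)
      =ᵐ[P x] (P x)[g | (FltG G) n] := by
    intro n
    have := condexp_eq hP n x (hBs n)
    rwa [hrep n] at this
  have hcond' : ∀ᵐ ω ∂(P x), ∀ n : ℕ, (P (ω n) (Bs n)).toReal = ((P x)[g | (FltG G) n]) ω :=
    ae_all_iff.mpr hcond
  filter_upwards [hlevy, hcond'] with ω hω hcω
  refine Tendsto.congr (fun n => (hcω n).symm) hω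

end Levy

section Bound

variable [Countable G] [MeasurableSpace G] [MeasurableSingletonClass G]

lemma tsum_mul_le_bound {a b c : G → ℝ≥0∞} (ha : ∑' w, a w = 1) (hc : ∀ w, c w ≤ 1) :
    ∑' w, a w * c w ≤ (∑' w, b w * c w) + (1 - ∑' w, min (a w) (b w)) := by
  have hmle : (∑' w, min (a w) (b w)) ≤ 1 := by
    rw [← ha]; exact ENNReal.tsum_le_tsum fun w => min_le_left _ _
  have key : ∀ w, a w * c w ≤ min (a w) (b w) * c w + (a w - min (a w) (b w)) := by
    intro w
    calc a w * c w = (min (a w) (b w) + (a w - min (a w) (b w))) * c w := by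
          rw [add_tsub_cancel_of_le (min_le_left _ _)]
      _ = min (a w) (b w) * c w + (a w - min (a w) (b w)) * c w := by rw [add_mul]
      _ ≤ min (a w) (b w) * c w + (a w - min (a w) (b w)) * 1 :=
          add_le_add_right (mul_le_mul_right (hc w) _) _
      _ = min (a w) (b w) * c w + (a w - min (a w) (b w)) := by rw [mul_one]
  calc ∑' w, a w * c w
      ≤ ∑' w, (min (a w) (b w) * c w + (a w - min (a w) (b w))) :=
        ENNReal.tsum_le_tsum key
    _ = (∑' w, min (a w) (b w) * c w) + ∑' w, (a w - min (a w) (b w)) :=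
        ENNReal.tsum_add
    _ ≤ (∑' w, b w * c w) + (1 - ∑' w, min (a w) (b w)) := by
        refine add_le_add (ENNReal.tsum_le_tsum fun w =>
          mul_le_mul_left (min_le_right _ _) _) ?_
        have hsum : (∑' w, (a w - min (a w) (b w))) + (∑' w, min (a w) (b w)) = 1 := by
          rw [← ENNReal.tsum_add, ← ha]
          exact tsum_congr fun w => tsub_add_cancel_of_le (min_le_left _ _)
        exact le_of_eq (ENNReal.eq_sub_of_add_eq (hmle.trans_lt one_lt_top).ne hsum)

end Bound
section Crux
open Filter Topology

variable [Countable G] [MeasurableSpace G] [MeasurableSingletonClass G]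
variable {K : G → Measure G} {P : G → Measure (ℕ → G)} [∀ x, IsProbabilityMeasure (P x)]
  (hP : ∀ x, IsPathLaw K x (P x)) (hK : ∀ x, IsProbabilityMeasure (K x))

include hP hK

lemma key_ineq (l : ℕ) (ε : ℝ≥0∞)
    (hε : ∀ z : G, ε ≤ meetMass (nStep K l z) (nStep K (l+1) z)) (z : G)
    {C : Set (ℕ → G)} (hC : MeasurableSet C) :
    P z (drop l ⁻¹' C) ≤ P z (drop (l+1) ⁻¹' C) + (1 - ε) := by
  rw [markov hP l z hC, markov hP (l+1) z hC]
  have ha : ∑' w : G, nStep K l z {w} = 1 := by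
    rw [tsum_singletons]; exact (nStep_prob K hK l z).measure_univ
  have hε' : ε ≤ ∑' w : G, min (nStep K l z {w}) (nStep K (l+1) z {w}) := hε z
  refine (tsum_mul_le_bound (b := fun w : G => nStep K (l+1) z {w}) ha
    (fun w => prob_le_one)).trans ?_
  exact add_le_add_right (tsub_le_tsub_left hε' 1) _

lemma key_ineq' (l : ℕ) (ε : ℝ≥0∞)
    (hε : ∀ z : G, ε ≤ meetMass (nStep K l z) (nStep K (l+1) z)) (z : G)
    {C : Set (ℕ → G)} (hC : MeasurableSet C) :
    P z (drop (l+1) ⁻¹' C) ≤ P z (drop l ⁻¹' C) + (1 - ε) := by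
  rw [markov hP l z hC, markov hP (l+1) z hC]
  have ha : ∑' w : G, nStep K (l+1) z {w} = 1 := by
    rw [tsum_singletons]; exact (nStep_prob K hK (l+1) z).measure_univ
  have hε' : ε ≤ ∑' w : G, min (nStep K (l+1) z {w}) (nStep K l z {w}) := by
    refine (hε z).trans (le_of_eq ?_)
    exact tsum_congr fun w => min_comm _ _
  refine (tsum_mul_le_bound (b := fun w : G => nStep K l z {w}) ha
    (fun w => prob_le_one)).trans ?_
  exact add_le_add_right (tsub_le_tsub_left hε' 1) _

lemma real_diff_bound (l : ℕ) (ε : ℝ≥0∞)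
    (hε : ∀ z : G, ε ≤ meetMass (nStep K l z) (nStep K (l+1) z)) (z : G)
    {C : Set (ℕ → G)} (hC : MeasurableSet C) :
    |(P z (drop l ⁻¹' C)).toReal - (P z (drop (l+1) ⁻¹' C)).toReal| ≤ (1 - ε).toReal := by
  have hne : (1 - ε : ℝ≥0∞) ≠ ∞ := (tsub_le_self.trans_lt one_lt_top).ne
  rw [abs_sub_le_iff]
  constructor
  · rw [sub_le_iff_le_add]
    have h := key_ineq hP hK l ε hε z hC
    calc (P z (drop l ⁻¹' C)).toReal
        ≤ (P z (drop (l+1) ⁻¹' C) + (1 - ε)).toReal :=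
          ENNReal.toReal_mono (ENNReal.add_ne_top.mpr ⟨measure_ne_top _ _, hne⟩) h
      _ = (1 - ε).toReal + (P z (drop (l+1) ⁻¹' C)).toReal := by
          rw [ENNReal.toReal_add (measure_ne_top _ _) hne, add_comm]
  · rw [sub_le_iff_le_add]
    have h := key_ineq' hP hK l ε hε z hC
    calc (P z (drop (l+1) ⁻¹' C)).toReal
        ≤ (P z (drop l ⁻¹' C) + (1 - ε)).toReal :=
          ENNReal.toReal_mono (ENNReal.add_ne_top.mpr ⟨measure_ne_top _ _, hne⟩) h
      _ = (1 - ε).toReal + (P z (drop l ⁻¹' C)).toReal := by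
          rw [ENNReal.toReal_add (measure_ne_top _ _) hne, add_comm]

lemma crux (l : ℕ) (ε : ℝ≥0∞) (hε0 : 0 < ε)
    (hε : ∀ z : G, ε ≤ meetMass (nStep K l z) (nStep K (l+1) z))
    {A : Set (ℕ → G)} (Bs : ℕ → Set (ℕ → G)) (hBs : ∀ n, MeasurableSet (Bs n))
    (hrep : ∀ n, drop n ⁻¹' (Bs n) = A) (x : G) :
    P x (symmDiff A (shift ⁻¹' A)) = 0 := by
  have hεle : ε ≤ 1 := by
    refine (hε x).trans ?_
    calc meetMass (nStep K l x) (nStep K (l+1) x)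
        ≤ ∑' w : G, nStep K l x {w} := ENNReal.tsum_le_tsum fun w => min_le_left _ _
      _ = 1 := by rw [tsum_singletons]; exact (nStep_prob K hK l x).measure_univ
  have hAmeas : MeasurableSet A := (hrep 0) ▸ ((hBs 0).preimage (measurable_drop 0))
  -- chain property
  have chain : ∀ n m : ℕ, Bs n = drop m ⁻¹' (Bs (n + m)) := by
    intro n m
    apply (drop_surj n).preimage_injective (α := ℕ → G)
    rw [hrep n, ← Set.preimage_comp, drop_comp, hrep (n + m)]
  -- representation of the shifted set
  set SA := shift ⁻¹' A with hSA
  have hrepS : ∀ n, drop n ⁻¹' (shift ⁻¹' (Bs n)) = SA := by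
    intro n
    rw [← Set.preimage_comp, shift_drop, hSA, ← hrep n, ← Set.preimage_comp, drop_shift]
  have hSAmeas : MeasurableSet SA := hAmeas.preimage measurable_shift
  -- pointwise bound
  have hbd : ∀ (n : ℕ) (z : G),
      |(P z (Bs n)).toReal - (P z (shift ⁻¹' (Bs n))).toReal| ≤ (1 - ε).toReal := by
    intro n z
    have e1 : Bs n = drop l ⁻¹' (Bs (n + l)) := chain n l
    have e2 : shift ⁻¹' (Bs n) = drop (l + 1) ⁻¹' (Bs (n + l)) := by
      rw [e1, ← Set.preimage_comp, drop_shift]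
    rw [e2, e1]
    exact real_diff_bound hP hK l ε hε z (hBs (n + l))
  -- two Lévy convergences
  have hlev1 := levy hP x hAmeas Bs hBs hrep
  have hlev2 := levy hP x hSAmeas (fun n => shift ⁻¹' (Bs n))
    (fun n => (hBs n).preimage measurable_shift) hrepS
  rw [measure_eq_zero_iff_ae_notMem]
  filter_upwards [hlev1, hlev2] with ω h1 h2
  intro hmem
  have habs : Tendsto
      (fun n => |(P (ω n) (Bs n)).toReal - (P (ω n) (shift ⁻¹' (Bs n))).toReal|) atTop
      (𝓝 |A.indicator (fun _ => (1:ℝ)) ω - SA.indicator (fun _ => (1:ℝ)) ω|) :=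
    (h1.sub h2).abs
  have hle : |A.indicator (fun _ => (1:ℝ)) ω - SA.indicator (fun _ => (1:ℝ)) ω|
      ≤ (1 - ε).toReal :=
    le_of_tendsto habs (Filter.Eventually.of_forall fun n => hbd n (ω n))
  have hval : |A.indicator (fun _ => (1:ℝ)) ω - SA.indicator (fun _ => (1:ℝ)) ω| = 1 := by
    rcases Set.mem_symmDiff.mp hmem with ⟨hA1, hA2⟩ | ⟨hA1, hA2⟩
    · rw [Set.indicator_of_mem hA1, Set.indicator_of_notMem hA2]; norm_num
    · rw [Set.indicator_of_notMem hA2, Set.indicator_of_mem hA1]; norm_num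
  have hlt : (1 - ε).toReal < 1 := by
    have hlt' : (1 - ε : ℝ≥0∞) < 1 := ENNReal.sub_lt_self one_ne_top one_ne_zero hε0.ne'
    have := ENNReal.toReal_strict_mono one_ne_top hlt'
    simpa using this
  rw [hval] at hle
  linarith

end Crux
section AinvSec
open Filter Topology

variable [Countable G] [MeasurableSpace G] [MeasurableSingletonClass G]

def Ainv (A : Set (ℕ → G)) : Set (ℕ → G) :=
  ⋂ N : ℕ, ⋃ n : ℕ, ⋃ (_ : N ≤ n), drop n ⁻¹' A

lemma mem_Ainv {A : Set (ℕ → G)} {ω : ℕ → G} :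
    ω ∈ Ainv A ↔ ∀ N : ℕ, ∃ n : ℕ, N ≤ n ∧ ω ∈ drop n ⁻¹' A := by
  simp [Ainv]

lemma Ainv_meas {A : Set (ℕ → G)} (hA : MeasurableSet A) : MeasurableSet (Ainv A) :=
  MeasurableSet.iInter fun _ => MeasurableSet.iUnion fun n => MeasurableSet.iUnion fun _ =>
    hA.preimage (measurable_drop n)

lemma drop_shift_mem {A : Set (ℕ → G)} (n : ℕ) (ω : ℕ → G) :
    shift ω ∈ drop n ⁻¹' A ↔ ω ∈ drop (n+1) ⁻¹' A := by
  have hc : drop n (shift ω) = drop (n+1) ω := congrFun (drop_shift n) ω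
  simp only [Set.mem_preimage]
  rw [show drop n (shift ω) = drop (n+1) ω from hc]

lemma Ainv_inv {A : Set (ℕ → G)} : shift ⁻¹' (Ainv A) = Ainv A := by
  ext ω
  rw [Set.mem_preimage, mem_Ainv, mem_Ainv]
  constructor
  · intro h N
    obtain ⟨n, hn, hmem⟩ := h N
    exact ⟨n + 1, by omega, (drop_shift_mem n ω).mp hmem⟩
  · intro h N
    obtain ⟨n, hn, hmem⟩ := h (N + 1)
    obtain ⟨m, rfl⟩ : ∃ m, n = m + 1 := ⟨n - 1, by omega⟩
    exact ⟨m, by omega, (drop_shift_mem m ω).mpr hmem⟩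

lemma symmDiff_Ainv_subset {A : Set (ℕ → G)} :
    symmDiff A (Ainv A) ⊆ ⋃ n : ℕ, drop n ⁻¹' (symmDiff A (shift ⁻¹' A)) := by
  intro ω hω
  rw [Set.mem_iUnion]
  by_contra hcon
  push_neg at hcon
  have hiff : ∀ n : ℕ, ω ∈ drop n ⁻¹' A ↔ ω ∈ drop (n+1) ⁻¹' A := by
    intro n
    have h := hcon n
    rw [Set.mem_preimage] at h
    rw [Set.mem_symmDiff] at h
    push_neg at h
    have hc : shift (drop n ω) = drop (n+1) ω := congrFun (shift_drop n) ω
    have e : drop n ω ∈ shift ⁻¹' A ↔ ω ∈ drop (n+1) ⁻¹' A := by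
      simp only [Set.mem_preimage]
      rw [show shift (drop n ω) = drop (n+1) ω from hc]
    exact ⟨fun hmem => e.mp (h.1 hmem), fun hmem => h.2 (e.mpr hmem)⟩
  have hzero : ω ∈ drop 0 ⁻¹' A ↔ ω ∈ A := by rw [drop_zero]; rfl
  have hall : (∀ n, ω ∈ drop n ⁻¹' A) ∨ (∀ n, ω ∉ drop n ⁻¹' A) := by
    by_cases h0 : ω ∈ A
    · left; intro n; induction n with
      | zero => exact hzero.mpr h0
      | succ n ih => exact (hiff n).mp ih
    · right; intro n; induction n with
      | zero => exact fun hmem => h0 (hzero.mp hmem)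
      | succ n ih => exact fun hmem => ih ((hiff n).mpr hmem)
  rw [Set.mem_symmDiff] at hω
  rcases hω with ⟨hA1, hA2⟩ | ⟨hA1, hA2⟩
  · rcases hall with hall | hall
    · exact hA2 (mem_Ainv.mpr fun N => ⟨N, le_rfl, hall N⟩)
    · exact hall 0 (hzero.mpr hA1)
  · obtain ⟨n, _, hn⟩ := mem_Ainv.mp hA1 0
    rcases hall with hall | hall
    · exact hA2 (hzero.mp (hall 0))
    · exact hall n hn

end AinvSec

end Helpers

/-- Under condition (*), every tail path property agrees, up to a null set
simultaneously for all starting points, with an invariant path property; consequently the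
chain with any initial distribution is steady, and under the Liouville property every tail
path property is trivial. -/
theorem steady_of_condition_star
    [Countable G] [MeasurableSpace G] [MeasurableSingletonClass G]
    (K : G → Measure G) (hK : ∀ x, IsProbabilityMeasure (K x))
    (hstar : ∃ (l : ℕ) (ε : ℝ≥0∞), 0 < ε ∧
      ∀ x : G, ε < meetMass (nStep K l x) (nStep K (l + 1) x))
    (P : G → Measure (ℕ → G)) [∀ x, IsProbabilityMeasure (P x)]
    (hP : ∀ x, IsPathLaw K x (P x)) :
    (∀ A : Set (ℕ → G), IsTailPathProperty A →
      ∃ A' : Set (ℕ → G), IsInvariantPathProperty A' ∧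
        ∀ x : G, P x (symmDiff A A') = 0) ∧
    (∀ μ₀ : Measure G, IsProbabilityMeasure μ₀ →
      ∀ A : Set (ℕ → G), IsTailPathProperty A →
        ∃ A' : Set (ℕ → G), IsInvariantPathProperty A' ∧
          (Measure.sum fun x : G => μ₀ {x} • P x) (symmDiff A A') = 0) ∧
    (LiouvilleProperty K →
      ∀ A : Set (ℕ → G), IsTailPathProperty A → ∀ x : G, P x A = 0 ∨ P x A = 1) := by
  classical
  obtain ⟨l, ε, hε0, hstar'⟩ := hstar
  have hεle : ∀ z : G, ε ≤ meetMass (nStep K l z) (nStep K (l+1) z) := fun z => (hstar' z).le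
  have main : ∀ A : Set (ℕ → G), IsTailPathProperty A →
      ∃ A' : Set (ℕ → G), IsInvariantPathProperty A' ∧ MeasurableSet A ∧
        ∀ x : G, P x (symmDiff A A') = 0 := by
    intro A hA
    have hrepmeas : ∀ n : ℕ, ∃ B : Set (ℕ → G), MeasurableSet B ∧ drop n ⁻¹' B = A := by
      intro n
      have h : MeasurableSet[tailMS G] A := hA
      rw [tailMS, MeasurableSpace.measurableSet_iInf] at h
      exact MeasurableSpace.measurableSet_comap.mp (h n)
    choose Bs hBsmeas hrep using hrepmeas
    have hAmeas : MeasurableSet A := (hrep 0) ▸ ((hBsmeas 0).preimage (measurable_drop 0))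
    have hDmeas : MeasurableSet (symmDiff A (shift ⁻¹' A)) :=
      hAmeas.symmDiff (hAmeas.preimage measurable_shift)
    have hcrux : ∀ x : G, P x (symmDiff A (shift ⁻¹' A)) = 0 :=
      crux hP hK l ε hε0 hεle Bs hBsmeas hrep
    refine ⟨Ainv A, ⟨Ainv_meas hAmeas, Ainv_inv⟩, hAmeas, fun x => ?_⟩
    refine measure_mono_null symmDiff_Ainv_subset (measure_iUnion_null fun n => ?_)
    rw [markov hP n x hDmeas]
    simp [hcrux]
  refine ⟨?_, ?_, ?_⟩
  · intro A hA
    obtain ⟨A', hinv, _, hnull⟩ := main A hA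
    exact ⟨A', hinv, hnull⟩
  · intro μ₀ hμ₀ A hA
    obtain ⟨A', hinv, hAmeas, hnull⟩ := main A hA
    refine ⟨A', hinv, ?_⟩
    have hDmeas : MeasurableSet (symmDiff A A') := hAmeas.symmDiff hinv.1
    rw [Measure.sum_apply _ hDmeas]
    simp [Measure.smul_apply, hnull]
  · intro hLiou A hA x
    obtain ⟨A', ⟨hA'meas, hA'inv⟩, hAmeas, hnull⟩ := main A hA
    have hdropinv : ∀ n : ℕ, drop n ⁻¹' A' = A' := by
      intro n
      induction n with
      | zero => rw [drop_zero]; rfl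
      | succ n ih => rw [← drop_shift n, Set.preimage_comp, ih, hA'inv]
    set h : G → ℝ := fun z => (P z A').toReal with hh
    have hone : ∀ z : G, P z A' = ∑' y : G, K z {y} * P y A' := by
      intro z
      conv_lhs => rw [← hA'inv]
      exact onestep hP z hA'meas
    have hharm : IsKHarmonic K h := by
      intro z
      show (P z A').toReal = _
      rw [hone z, ENNReal.tsum_toReal_eq
        (fun y => ENNReal.mul_ne_top (measure_ne_top _ _) (measure_ne_top _ _))]
      exact tsum_congr fun y => ENNReal.toReal_mul
    have hbdd : ∃ C : ℝ, ∀ z, |h z| ≤ C := by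
      refine ⟨1, fun z => ?_⟩
      rw [abs_of_nonneg ENNReal.toReal_nonneg]
      exact ENNReal.toReal_le_of_le_ofReal one_pos.le (by simpa using prob_le_one)
    have hconst := hLiou h hbdd hharm
    have hlev := levy hP x hA'meas (fun _ => A') (fun _ => hA'meas) hdropinv
    have hae : ∀ᵐ ω ∂(P x), A'.indicator (fun _ => (1:ℝ)) ω = h x := by
      filter_upwards [hlev] with ω hω
      have hconstseq : (fun n : ℕ => (P (ω n) A').toReal) = fun _ : ℕ => h x :=
        funext fun n => hconst (ω n) x
      rw [hconstseq] at hω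
      exact (tendsto_nhds_unique hω tendsto_const_nhds)
    have hPA : P x A = P x A' := by
      apply measure_congr
      rw [MeasureTheory.ae_eq_set]
      constructor
      · refine measure_mono_null ?_ (hnull x)
        rw [Set.symmDiff_def]
        exact Set.subset_union_left
      · refine measure_mono_null ?_ (hnull x)
        rw [Set.symmDiff_def]
        exact Set.subset_union_right
    by_cases hx1 : h x = 1
    · right
      rw [hPA]
      rw [← prob_compl_eq_zero_iff hA'meas]
      rw [measure_eq_zero_iff_ae_notMem]
      filter_upwards [hae] with ω hω hmem
      rw [Set.mem_compl_iff] at hmem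
      rw [Set.indicator_of_notMem hmem, hx1] at hω
      norm_num at hω
    · left
      rw [hPA]
      rw [measure_eq_zero_iff_ae_notMem]
      filter_upwards [hae] with ω hω hmem
      rw [Set.indicator_of_mem hmem] at hω
      exact hx1 hω.symm

end CMTPaper
end
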